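/- arXiv:1312.6620 — 7 statements merged into one kernel-verified Lean document; each statement's English description precedes it below -/
import Mathlib

section
/- Let K be a number field, ℓ a prime number, and let a ∈ K^× not be a root of unity. Then there exist a nonnegative integer d, an element A ∈ K^× that is strongly ℓ-indivisible, and a root of unity ζ ∈ K of ℓ-power order, such that a = A^{ℓ^d}·ζ. Moreover the integer d is uniquely determined by K, ℓ and a. -/
open NumberField IsDedekindDomain IntermediateField

set_option synthInstance.maxHeartbeats 1000000
set_option maxHeartbeats 1000000

noncomputable section

/-- A fixed algebraic closure of `K`. -/
abbrev Kbar (K : Type) [Field K] := AlgebraicClosure K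

/-- The cyclotomic extension `K(ζ_m)` of `K` inside `Kbar K`,
obtained by adjoining all `m`-th roots of unity. -/
def cyclo (K : Type) [Field K] (m : ℕ) : IntermediateField K (Kbar K) :=
  IntermediateField.adjoin K {x : Kbar K | x ^ m = 1}

/-- The field `K(ζ_m)(n-th roots of G)`: the smallest extension of `K` inside `Kbar K`
containing all `m`-th roots of unity and all `n`-th roots of every element of `G`. -/
def cycloKummer (K : Type) [Field K] (G : Subgroup Kˣ) (m n : ℕ) :
    IntermediateField K (Kbar K) :=
  IntermediateField.adjoin K
    ({x : Kbar K | x ^ m = 1} ∪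
      {x : Kbar K | ∃ g ∈ G, x ^ n = algebraMap K (Kbar K) (g : K)})

/-- A prime `v` of `K` is good for `G` if every element of `G` is a `v`-adic unit,
i.e. the reduction of `G` modulo `v` is well-defined and does not contain `0`. -/
def GoodPrime (K : Type) [Field K] [NumberField K] (G : Subgroup Kˣ)
    (v : HeightOneSpectrum (𝓞 K)) : Prop :=
  ∀ g ∈ G, ∃ a b : 𝓞 K, a ∉ v.asIdeal ∧ b ∉ v.asIdeal ∧
    (g : K) * algebraMap (𝓞 K) K b = algebraMap (𝓞 K) K a

/-- The reduction of `G` modulo `v`, as a subset of the residue field at `v`. -/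
def reductionSet (K : Type) [Field K] [NumberField K] (G : Subgroup Kˣ)
    (v : HeightOneSpectrum (𝓞 K)) : Set ((𝓞 K) ⧸ v.asIdeal) :=
  {y | ∃ g ∈ G, ∃ a b : 𝓞 K, b ∉ v.asIdeal ∧
    (g : K) * algebraMap (𝓞 K) K b = algebraMap (𝓞 K) K a ∧
    y * Ideal.Quotient.mk v.asIdeal b = Ideal.Quotient.mk v.asIdeal a}

/-- The set `S` of primes of `K` has natural density `dens`. -/
def HasDensity (K : Type) [Field K] [NumberField K]
    (S : Set (HeightOneSpectrum (𝓞 K))) (dens : ℝ) : Prop :=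
  Filter.Tendsto (fun N : ℕ =>
      (Nat.card {v : HeightOneSpectrum (𝓞 K) //
          v ∈ S ∧ Nat.card ((𝓞 K) ⧸ v.asIdeal) ≤ N} : ℝ) /
      (Nat.card {v : HeightOneSpectrum (𝓞 K) //
          Nat.card ((𝓞 K) ⧸ v.asIdeal) ≤ N} : ℝ))
    Filter.atTop (nhds dens)

/-- The set of (good) primes of `K` such that the reduction of `G` has size coprime to `ℓ`. -/
def CoprimeRed (K : Type) [Field K] [NumberField K] (ℓ : ℕ) (G : Subgroup Kˣ) :
    Set (HeightOneSpectrum (𝓞 K)) :=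
  {v | GoodPrime K G v ∧ ¬ ℓ ∣ Nat.card (reductionSet K G v)}

/-- `a ∈ Lˣ` is strongly `ℓ`-indivisible: there is no root of unity `ζ ∈ L` of
`ℓ`-power order such that `aζ` is an `ℓ`-th power in `Lˣ`. -/
def StronglyIndiv (L : Type) [Field L] (ℓ : ℕ) (a : Lˣ) : Prop :=
  ¬ ∃ (ζ b : Lˣ) (k : ℕ), ζ ^ ℓ ^ k = 1 ∧ a * ζ = b ^ ℓ

/-- `B 0, …, B (r-1)` are strongly `ℓ`-independent elements of `Lˣ`. -/
def StronglyIndep (L : Type) [Field L] (ℓ : ℕ) {r : ℕ} (B : Fin r → Lˣ) : Prop :=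
  ∀ x : Fin r → ℤ, (∃ i, ¬ (ℓ : ℤ) ∣ x i) → StronglyIndiv L ℓ (∏ i, B i ^ x i)

/-- The tuple `(d, h)` expresses the `ℓ`-divisibility of `G` in `K`. -/
def ExpressesDiv (K : Type) [Field K] (ℓ : ℕ) (G : Subgroup Kˣ) {r : ℕ}
    (d h : Fin r → ℕ) : Prop :=
  ∃ B ζ : Fin r → Kˣ, StronglyIndep K ℓ B ∧ (∀ i, orderOf (ζ i) = ℓ ^ h i) ∧
    G = Subgroup.closure (Set.range fun i => B i ^ ℓ ^ d i * ζ i)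

end


section AuxStmt6

open NumberField IsDedekindDomain FractionalIdeal nonZeroDivisors

noncomputable section


variable {K : Type} [Field K] [NumberField K]

def cnt (v : HeightOneSpectrum (𝓞 K)) (x : Kˣ) : ℤ :=
  FractionalIdeal.count K v (spanSingleton (𝓞 K)⁰ (x : K))

lemma span_ne (x : Kˣ) : spanSingleton (𝓞 K)⁰ (x : K) ≠ 0 :=
  spanSingleton_ne_zero_iff.mpr x.ne_zero

lemma cnt_mul (v : HeightOneSpectrum (𝓞 K)) (x y : Kˣ) :
    cnt v (x * y) = cnt v x + cnt v y := by
  unfold cnt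
  rw [Units.val_mul, ← spanSingleton_mul_spanSingleton]
  exact count_mul K v (span_ne x) (span_ne y)

lemma cnt_one (v : HeightOneSpectrum (𝓞 K)) : cnt v (1 : Kˣ) = 0 := by
  unfold cnt; rw [Units.val_one, spanSingleton_one]; exact count_one K v

lemma cnt_pow (v : HeightOneSpectrum (𝓞 K)) (x : Kˣ) (n : ℕ) :
    cnt v (x ^ n) = n * cnt v x := by
  unfold cnt
  rw [Units.val_pow_eq_pow_val, ← spanSingleton_pow, count_pow]

lemma cnt_tors (v : HeightOneSpectrum (𝓞 K)) (x : Kˣ) {m : ℕ} (hm : m ≠ 0)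
    (h : x ^ m = 1) : cnt v x = 0 := by
  have := cnt_pow v x m
  rw [h, cnt_one] at this
  have := this.symm
  rcases mul_eq_zero.mp this with h' | h'
  · exact absurd (Nat.cast_eq_zero.mp h') hm
  · exact h'

lemma span_eq_one_of_cnt (x : Kˣ) (h : ∀ v, cnt v x = 0) :
    spanSingleton (𝓞 K)⁰ (x : K) = 1 := by
  have hne := span_ne x
  rw [← finprod_heightOneSpectrum_factorization' K hne]
  have : ∀ v : HeightOneSpectrum (𝓞 K),
      (v.asIdeal : FractionalIdeal (𝓞 K)⁰ K) ^ (count K v (spanSingleton (𝓞 K)⁰ (x : K))) = 1 := by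
    intro v
    rw [show count K v (spanSingleton (𝓞 K)⁰ (x : K)) = 0 from h v, zpow_zero]
  rw [finprod_congr this, finprod_one]

lemma unit_of_span_eq_one (x : Kˣ) (h : spanSingleton (𝓞 K)⁰ (x : K) = 1) :
    ∃ u : (𝓞 K)ˣ, algebraMap (𝓞 K) K (u : 𝓞 K) = (x : K) := by
  have hx : (x : K) ∈ (1 : FractionalIdeal (𝓞 K)⁰ K) := h ▸ mem_spanSingleton_self _ _
  have hxi : ((x⁻¹ : Kˣ) : K) ∈ (1 : FractionalIdeal (𝓞 K)⁰ K) := by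
    have h2 : spanSingleton (𝓞 K)⁰ ((x⁻¹ : Kˣ) : K) = 1 := by
      have := spanSingleton_mul_spanSingleton (S := (𝓞 K)⁰) ((x : Kˣ) : K) ((x⁻¹ : Kˣ) : K)
      rw [h, one_mul, ← Units.val_mul, mul_inv_cancel, Units.val_one, spanSingleton_one] at this
      exact this
    exact h2 ▸ mem_spanSingleton_self _ _
  obtain ⟨u, hu⟩ := (mem_one_iff _).mp hx
  obtain ⟨w, hw⟩ := (mem_one_iff _).mp hxi
  have huw : u * w = 1 := by
    apply IsFractionRing.injective (𝓞 K) K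
    rw [_root_.map_mul, hu, hw, _root_.map_one, ← Units.val_mul, mul_inv_cancel, Units.val_one]
  exact ⟨⟨u, w, huw, by rwa [mul_comm] at huw⟩, hu⟩



variable {K : Type} [Field K] [NumberField K]
set_option maxSynthPendingDepth 2

lemma bound_exists (ℓ : ℕ) (hℓ : ℓ.Prime) (a : Kˣ) (ha : ¬ IsOfFinOrder a) :
    ∃ N : ℕ, ∀ d : ℕ, (∃ (A ζ : Kˣ) (k : ℕ), ζ ^ ℓ ^ k = 1 ∧ a = A ^ ℓ ^ d * ζ) → d ≤ N := by
  have hℓ0 : ∀ k : ℕ, ℓ ^ k ≠ 0 := fun k => pow_ne_zero k hℓ.ne_zero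
  by_cases hone : spanSingleton (𝓞 K)⁰ (a : K) = 1
  · -- unit case
    obtain ⟨u, hu⟩ := unit_of_span_eq_one a hone
    set f : (𝓞 K)ˣ →* Kˣ := Units.map (algebraMap (𝓞 K) K : (𝓞 K) →* K) with hf
    have hinj : Function.Injective f := Units.map_injective (IsFractionRing.injective (𝓞 K) K)
    have hfu : f u = a := Units.ext (by simpa [hf] using hu)
    set π : (𝓞 K)ˣ →* ((𝓞 K)ˣ ⧸ NumberField.Units.torsion K) :=
      QuotientGroup.mk' (NumberField.Units.torsion K) with hπ
    set c := (NumberField.Units.basisModTorsion K).repr (Additive.ofMul (π u)) with hcdef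
    have hutors : u ∉ NumberField.Units.torsion K := by
      intro h
      exact ha (hfu ▸ f.isOfFinOrder ((CommGroup.mem_torsion _).mp h))
    have hc : c ≠ 0 := by
      intro h
      apply hutors
      have h2 : Additive.ofMul (π u) = 0 :=
        (LinearEquiv.map_eq_zero_iff _).mp h
      exact (QuotientGroup.eq_one_iff u).mp (Additive.ofMul.injective h2)
    obtain ⟨i, hi⟩ : ∃ i, c i ≠ 0 := by
      by_contra h
      push_neg at h
      exact hc (Finsupp.ext h)
    refine ⟨(c i).natAbs, fun d ⟨A, ζ, k, hz, he⟩ => ?_⟩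
    have hca : ∀ v, cnt v a = 0 := fun v => by
      unfold cnt; rw [hone]; exact count_one K v
    have hcz : ∀ v, cnt v ζ = 0 := fun v => cnt_tors v ζ (hℓ0 k) hz
    have hcA : ∀ v, cnt v A = 0 := by
      intro v
      have h1 := hca v
      rw [he, cnt_mul, cnt_pow, hcz v, add_zero] at h1
      rcases mul_eq_zero.mp h1 with h' | h'
      · exact absurd (Nat.cast_eq_zero.mp h') (hℓ0 d)
      · exact h'
    obtain ⟨U, hU⟩ := unit_of_span_eq_one A (span_eq_one_of_cnt A hcA)
    obtain ⟨W, hW⟩ := unit_of_span_eq_one ζ (span_eq_one_of_cnt ζ hcz)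
    have hUA : f U = A := Units.ext (by simpa [hf] using hU)
    have hWz : f W = ζ := Units.ext (by simpa [hf] using hW)
    have hrel : u = U ^ ℓ ^ d * W := hinj (by rw [_root_.map_mul, _root_.map_pow, hfu, hUA, hWz]; exact he)
    have hWt : W ∈ NumberField.Units.torsion K := by
      rw [NumberField.Units.torsion, CommGroup.mem_torsion]
      refine isOfFinOrder_iff_pow_eq_one.mpr ⟨ℓ ^ k, Nat.pos_of_ne_zero (hℓ0 k), ?_⟩
      exact hinj (by rw [_root_.map_pow, hWz, _root_.map_one]; exact hz)
    have hq : Additive.ofMul (π u) = (ℓ ^ d) • Additive.ofMul (π U) := by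
      have hW1 : π W = 1 := (QuotientGroup.eq_one_iff W).mpr hWt
      rw [hrel, _root_.map_mul, _root_.map_pow, hW1, mul_one, ofMul_pow]
    have hcmul : c = (ℓ ^ d) • (NumberField.Units.basisModTorsion K).repr (Additive.ofMul (π U)) := by
      rw [hcdef, hq, map_nsmul]
    have hdvd : (ℓ : ℤ) ^ d ∣ c i := by
      refine ⟨(NumberField.Units.basisModTorsion K).repr (Additive.ofMul (π U)) i, ?_⟩
      rw [hcmul, Finsupp.smul_apply, nsmul_eq_mul]
      push_cast
      ring
    have hle : (ℓ : ℤ) ^ d ≤ |c i| := Int.le_of_dvd (abs_pos.mpr hi) ((dvd_abs _ _).mpr hdvd)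
    have hle' : ℓ ^ d ≤ (c i).natAbs := by
      rw [Int.abs_eq_natAbs] at hle
      exact_mod_cast hle
    exact le_trans (Nat.lt_pow_self (n := d) hℓ.one_lt).le hle'
  · -- valuation case
    have hv : ∃ v, cnt v a ≠ 0 := by
      by_contra h
      push_neg at h
      exact hone (span_eq_one_of_cnt a h)
    obtain ⟨v, hv⟩ := hv
    refine ⟨(cnt v a).natAbs, fun d ⟨A, ζ, k, hz, he⟩ => ?_⟩
    have h1 : cnt v a = (ℓ ^ d : ℕ) * cnt v A := by
      rw [he, cnt_mul, cnt_pow, cnt_tors v ζ (hℓ0 k) hz, add_zero]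
    have hdvd : (ℓ : ℤ) ^ d ∣ cnt v a := ⟨cnt v A, by rw [h1]; push_cast; ring⟩
    have hle : (ℓ : ℤ) ^ d ≤ |cnt v a| := Int.le_of_dvd (abs_pos.mpr hv) ((dvd_abs _ _).mpr hdvd)
    have hle' : ℓ ^ d ≤ (cnt v a).natAbs := by
      rw [Int.abs_eq_natAbs] at hle
      exact_mod_cast hle
    exact le_trans (Nat.lt_pow_self (n := d) hℓ.one_lt).le hle'


lemma step_lemma {K : Type} [Field K] (ℓ : ℕ) (hℓ : ℓ.Prime)
    {a A₁ A₂ ζ₁ ζ₂ : Kˣ} {k₁ k₂ d₁ d₂ : ℕ} (hlt : d₁ < d₂)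
    (indiv : StronglyIndiv K ℓ A₁)
    (hz1 : ζ₁ ^ ℓ ^ k₁ = 1) (hz2 : ζ₂ ^ ℓ ^ k₂ = 1)
    (e1 : a = A₁ ^ ℓ ^ d₁ * ζ₁) (e2 : a = A₂ ^ ℓ ^ d₂ * ζ₂) : False := by
  apply indiv
  refine ⟨A₁⁻¹ * A₂ ^ ℓ ^ (d₂ - d₁), A₂ ^ ℓ ^ (d₂ - d₁ - 1), d₁ + (k₁ + k₂), ?_, ?_⟩
  · have h1 : A₁ ^ ℓ ^ d₁ * ζ₁ = A₂ ^ ℓ ^ d₂ * ζ₂ := by rw [← e1, ← e2]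
    have h2 : (A₂ ^ ℓ ^ (d₂ - d₁)) ^ ℓ ^ d₁ = A₂ ^ ℓ ^ d₂ := by
      rw [← pow_mul, ← pow_add, Nat.sub_add_cancel hlt.le]
    have h4 : A₂ ^ ℓ ^ d₂ = A₁ ^ ℓ ^ d₁ * ζ₁ * ζ₂⁻¹ :=
      eq_mul_inv_iff_mul_eq.mpr h1.symm
    have key : (A₁⁻¹ * A₂ ^ ℓ ^ (d₂ - d₁)) ^ ℓ ^ d₁ = ζ₁ * ζ₂⁻¹ := by
      rw [mul_pow, inv_pow, h2, h4, mul_assoc (A₁ ^ ℓ ^ d₁), inv_mul_cancel_left]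
    rw [pow_add, pow_mul, key, mul_pow, pow_add, pow_mul, hz1, one_pow, one_mul,
      mul_comm (ℓ ^ k₁), pow_mul, inv_pow, hz2, inv_one, one_pow]
  · have h3 : ℓ ^ (d₂ - d₁ - 1) * ℓ = ℓ ^ (d₂ - d₁) := by
      rw [← pow_succ, Nat.sub_add_cancel (by omega)]
    rw [← pow_mul, h3, ← mul_assoc, mul_inv_cancel, one_mul]

end

end AuxStmt6

/-- every `a ∈ Kˣ` that is not a root of unity can be written as
`a = A ^ ℓ ^ d * ζ` with `A` strongly `ℓ`-indivisible and `ζ ∈ K` a root of unity of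
`ℓ`-power order; the integer `d` is uniquely determined. -/
theorem stmt6 (K : Type) [Field K] [NumberField K] (ℓ : ℕ) (hℓ : ℓ.Prime)
    (a : Kˣ) (ha : ¬ IsOfFinOrder a) :
    ∃! d : ℕ, ∃ (A ζ : Kˣ) (k : ℕ),
      StronglyIndiv K ℓ A ∧ ζ ^ ℓ ^ k = 1 ∧ a = A ^ ℓ ^ d * ζ := by
  classical
  set D : Set ℕ := {d | ∃ (A ζ : Kˣ) (k : ℕ), ζ ^ ℓ ^ k = 1 ∧ a = A ^ ℓ ^ d * ζ} with hD
  have h0 : (0 : ℕ) ∈ D := ⟨a, 1, 0, one_pow _, by simp⟩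
  obtain ⟨N, hN⟩ := bound_exists ℓ hℓ a ha
  have hbdd : BddAbove D := ⟨N, fun d hd => hN d hd⟩
  set d := sSup D with hddef
  have hdD : d ∈ D := Nat.sSup_mem ⟨0, h0⟩ hbdd
  simp only [hD, Set.mem_setOf_eq] at hdD
  obtain ⟨A, ζ, k, hz, he⟩ := hdD
  have hindiv : StronglyIndiv K ℓ A := by
    intro h
    obtain ⟨ξ, b, k', hξ, hb⟩ := h
    have hmem : d + 1 ∈ D := by
      refine ⟨b, ξ⁻¹ ^ ℓ ^ d * ζ, k' + k, ?_, ?_⟩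
      · have hξ1 : ξ ^ (ℓ ^ d * ℓ ^ (k' + k)) = 1 := by
          have hex : ℓ ^ d * ℓ ^ (k' + k) = ℓ ^ k' * (ℓ ^ d * ℓ ^ k) := by ring
          rw [hex, pow_mul, hξ, one_pow]
        rw [mul_pow, ← pow_mul, inv_pow, hξ1, inv_one, one_mul, pow_add,
          mul_comm (ℓ ^ k'), pow_mul, hz, one_pow]
      · have hA : A = b ^ ℓ * ξ⁻¹ := eq_mul_inv_iff_mul_eq.mpr hb
        rw [he, hA, mul_pow, ← pow_mul,
          show ℓ * ℓ ^ d = ℓ ^ (d + 1) by rw [pow_succ, mul_comm], mul_assoc]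
    have : d + 1 ≤ d := le_csSup hbdd hmem
    omega
  refine ⟨d, ⟨A, ζ, k, hindiv, hz, he⟩, ?_⟩
  rintro d' ⟨A', ζ', k', hindiv', hz', he'⟩
  have hd'D : d' ∈ D := ⟨A', ζ', k', hz', he'⟩
  have hle : d' ≤ d := le_csSup hbdd hd'D
  rcases lt_or_eq_of_le hle with hlt | heq
  · exact (step_lemma ℓ hℓ hlt hindiv' hz' hz he' he).elim
  · exact heq
end

section
/- (Schinzel) Let K be a number field and ℓ a prime number such that K does not contain a primitive ℓ-th root of unity. If a ∈ K^× is strongly ℓ-indivisible, then the extension K(ζ_ℓ, ℓ-th root of a)/K is not abelian (i.e. it is Galois with non-abelian Galois group, or not Galois). -/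
open NumberField IsDedekindDomain IntermediateField

set_option synthInstance.maxHeartbeats 1000000
set_option maxHeartbeats 1000000

/-- Schinzel: if `ζ_ℓ ∉ K` and `a ∈ Kˣ` is strongly `ℓ`-indivisible, then
the extension `K(ζ_ℓ, ℓ-th root of a)/K` is not abelian (i.e. it is not both Galois and
with commutative Galois group). -/
theorem stmt7 (K : Type) [Field K] [NumberField K] (ℓ : ℕ) (hℓ : ℓ.Prime)
    (hK : ¬ ∃ ζ : K, IsPrimitiveRoot ζ ℓ)
    (a : Kˣ) (ha : StronglyIndiv K ℓ a) :
    ¬ (IsGalois K ↥(IntermediateField.adjoin K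
          ({x : Kbar K | x ^ ℓ = 1} ∪
            {x : Kbar K | x ^ ℓ = algebraMap K (Kbar K) (a : K)})) ∧
        ∀ σ τ : ↥(IntermediateField.adjoin K
          ({x : Kbar K | x ^ ℓ = 1} ∪
            {x : Kbar K | x ^ ℓ = algebraMap K (Kbar K) (a : K)})) ≃ₐ[K]
          ↥(IntermediateField.adjoin K
          ({x : Kbar K | x ^ ℓ = 1} ∪
            {x : Kbar K | x ^ ℓ = algebraMap K (Kbar K) (a : K)})),
          σ * τ = τ * σ) := by
  rintro ⟨hGal, hcomm⟩
  haveI : NeZero ℓ := ⟨hℓ.ne_zero⟩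
  haveI : Fact ℓ.Prime := ⟨hℓ⟩
  set S : Set (Kbar K) :=
    {x : Kbar K | x ^ ℓ = 1} ∪
      {x : Kbar K | x ^ ℓ = algebraMap K (Kbar K) (a : K)} with hSdef
  set E : IntermediateField K (Kbar K) := IntermediateField.adjoin K S with hEdef
  -- finite dimensionality
  have hSfin : S.Finite := by
    apply Set.Finite.union
    · have h1 : (Polynomial.X ^ ℓ - 1 : Polynomial (Kbar K)) ≠ 0 := by
        intro h
        have := congrArg (Polynomial.coeff · ℓ) h
        simp [Polynomial.coeff_X_pow, hℓ.ne_zero, Polynomial.coeff_one] at this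
      refine (Polynomial.finite_setOf_isRoot h1).subset ?_
      intro x hx
      simp only [Set.mem_setOf_eq] at hx ⊢
      simp [Polynomial.IsRoot, hx]
    · have h1 : (Polynomial.X ^ ℓ - Polynomial.C (algebraMap K (Kbar K) (a : K)) :
          Polynomial (Kbar K)) ≠ 0 := by
        intro h
        have := congrArg (Polynomial.coeff · ℓ) h
        simp [Polynomial.coeff_X_pow, hℓ.ne_zero, Polynomial.coeff_C] at this
      refine (Polynomial.finite_setOf_isRoot h1).subset ?_
      intro x hx
      simp only [Set.mem_setOf_eq] at hx ⊢
      simp [Polynomial.IsRoot, hx]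
  haveI : Finite S := hSfin.to_subtype
  haveI : FiniteDimensional K E := by
    refine IntermediateField.finiteDimensional_adjoin fun x _ => ?_
    exact Algebra.IsIntegral.isIntegral x
  -- the generators
  have hane : algebraMap K (Kbar K) (a : K) ≠ 0 := by
    simp [a.ne_zero]
  obtain ⟨ζ0, hζ0⟩ := HasEnoughRootsOfUnity.exists_primitiveRoot (Kbar K) ℓ
  obtain ⟨α0, hα0⟩ := IsAlgClosed.exists_pow_nat_eq (algebraMap K (Kbar K) (a : K)) hℓ.pos
  have hζ0mem : ζ0 ∈ E := IntermediateField.subset_adjoin K S (Or.inl hζ0.pow_eq_one)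
  have hα0mem : α0 ∈ E := IntermediateField.subset_adjoin K S (Or.inr hα0)
  set ζ : E := ⟨ζ0, hζ0mem⟩ with hζdef
  set α : E := ⟨α0, hα0mem⟩ with hαdef
  have hζprim : IsPrimitiveRoot ζ ℓ := by
    apply IsPrimitiveRoot.of_map_of_injective (f := E.val.toRingHom.toMonoidHom)
    · exact hζ0
    · exact Subtype.val_injective
  have hαpow : α ^ ℓ = algebraMap K E (a : K) := by
    apply Subtype.ext
    push_cast
    rw [hα0]
  have hζne : ζ ≠ 0 := hζprim.ne_zero hℓ.ne_zero
  have hαne : α ≠ 0 := by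
    intro h
    apply hane
    rw [← hα0]
    have h0 : α0 = 0 := congrArg Subtype.val h
    rw [h0, zero_pow hℓ.ne_zero]
  -- exponent arithmetic helpers
  have hzeq : ∀ m n : ℤ, ((m : ZMod ℓ) = (n : ZMod ℓ)) → ζ ^ m = ζ ^ n := by
    intro m n h
    have hdvd : (ℓ : ℤ) ∣ m - n :=
      Int.ModEq.dvd (Int.ModEq.symm ((ZMod.intCast_eq_intCast_iff _ _ _).mp h))
    have h1 : ζ ^ (m - n) = 1 := (hζprim.zpow_eq_one_iff_dvd _).mpr hdvd
    calc ζ ^ m = ζ ^ (m - n) * ζ ^ n := by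
          rw [← zpow_add₀ hζne]; ring_nf
      _ = ζ ^ n := by rw [h1, one_mul]
  have hzne : ∀ m n : ℤ, ζ ^ m = ζ ^ n → ((m : ZMod ℓ) = (n : ZMod ℓ)) := by
    intro m n h
    have h1 : ζ ^ (m - n) = 1 := by
      rw [zpow_sub₀ hζne, h, div_self (zpow_ne_zero _ hζne)]
    have hdvd : (ℓ : ℤ) ∣ m - n := (hζprim.zpow_eq_one_iff_dvd _).mp h1
    exact (ZMod.intCast_eq_intCast_iff _ _ _).mpr
      (Int.ModEq.symm (Int.modEq_iff_dvd.mpr hdvd))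
  -- fixed elements are in K
  have hfix : ∀ x : E, (∀ σ : E ≃ₐ[K] E, σ x = x) → ∃ b : K, algebraMap K E b = x := by
    intro x hx
    have h1 : IntermediateField.fixedField (⊤ : Subgroup (E ≃ₐ[K] E)) = ⊥ :=
      ((IsGalois.tfae (F := K) (E := E)).out 0 1).mp hGal
    have hx' : x ∈ IntermediateField.fixedField (⊤ : Subgroup (E ≃ₐ[K] E)) :=
      fun g => hx g
    rw [h1, IntermediateField.mem_bot] at hx'
    exact hx'
  -- every automorphism sends an ℓ-th root of a to ζ^j times it
  have hroot : ∀ (τ : E ≃ₐ[K] E) (x : E), x ^ ℓ = algebraMap K E (a : K) →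
      ∃ j : ℤ, τ x = ζ ^ j * x := by
    intro τ x hx
    have hxne : x ≠ 0 := by
      intro h
      rw [h, zero_pow hℓ.ne_zero] at hx
      exact hane (by
        have := congrArg (E.val) hx.symm
        simpa using this)
    have haEne : algebraMap K E (a : K) ≠ 0 := by rw [← hx]; exact pow_ne_zero _ hxne
    have h1 : (τ x * x⁻¹) ^ ℓ = 1 := by
      rw [mul_pow, ← map_pow, hx, AlgEquiv.commutes, inv_pow, hx,
        mul_inv_cancel₀ haEne]
    obtain ⟨i, _, hi⟩ := hζprim.eq_pow_of_pow_eq_one h1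
    refine ⟨(i : ℤ), ?_⟩
    rw [zpow_natCast, hi]
    field_simp
  -- main case distinction
  by_cases hσall : ∀ σ : E ≃ₐ[K] E, σ ζ = ζ
  · -- ζ would be in K
    obtain ⟨z, hz⟩ := hfix ζ hσall
    apply hK
    refine ⟨z, ?_⟩
    apply IsPrimitiveRoot.of_map_of_injective
      (f := (algebraMap K E).toMonoidHom)
    · rw [RingHom.toMonoidHom_eq_coe, MonoidHom.coe_coe, hz]; exact hζprim
    · exact (algebraMap K E).injective
  · push_neg at hσall
    obtain ⟨σ, hσζ⟩ := hσall
    -- σ ζ = ζ ^ g with g ≠ 1 mod ℓ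
    have hσζpow : (σ ζ) ^ ℓ = 1 := by rw [← map_pow, hζprim.pow_eq_one, map_one]
    obtain ⟨g, _, hg⟩ := hζprim.eq_pow_of_pow_eq_one hσζpow
    have hgz : σ ζ = ζ ^ (g : ℤ) := by rw [zpow_natCast, hg]
    have hgne1 : ((g : ℤ) : ZMod ℓ) ≠ 1 := by
      intro h
      apply hσζ
      rw [hgz]
      have h1 : (((g : ℤ)) : ZMod ℓ) = (((1 : ℤ)) : ZMod ℓ) := by push_cast at h ⊢; exact h
      rw [hzeq _ _ h1, zpow_one]
    obtain ⟨i, hi⟩ := hroot σ α hαpow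
    -- define the fixed root β
    set c : ZMod ℓ := ((i : ZMod ℓ)) * (1 - (g : ℤ) : ZMod ℓ)⁻¹ with hcdef
    set cz : ℤ := (c.val : ℤ) with hczdef
    have hcz : ((cz : ZMod ℓ)) = c := by
      rw [hczdef]; push_cast; exact ZMod.natCast_rightInverse c
    set β : E := ζ ^ cz * α with hβdef
    have hβne : β ≠ 0 := mul_ne_zero (zpow_ne_zero _ hζne) hαne
    have hβpow : β ^ ℓ = algebraMap K E (a : K) := by
      rw [hβdef, mul_pow, ← zpow_natCast (ζ ^ cz), ← zpow_mul, mul_comm cz,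
        zpow_mul, zpow_natCast ζ ℓ, hζprim.pow_eq_one, one_zpow, one_mul, hαpow]
    have hsub : (1 : ZMod ℓ) - ((g : ℤ) : ZMod ℓ) ≠ 0 := by
      intro h
      apply hgne1
      have := sub_eq_zero.mp h
      rw [← this]
    have hσβ : σ β = β := by
      rw [hβdef, map_mul, map_zpow₀, hgz, hi, ← zpow_mul, ← mul_assoc,
        ← zpow_add₀ hζne]
      congr 1
      apply hzeq
      push_cast
      rw [hcz]
      rw [hcdef]
      have hsub' : (1 : ZMod ℓ) - (g : ZMod ℓ) ≠ 0 := by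
        intro hh
        exact hsub (by push_cast; exact hh)
      push_cast
      field_simp [hsub']
      ring
    -- every τ fixes β
    have hτβ : ∀ τ : E ≃ₐ[K] E, τ β = β := by
      intro τ
      obtain ⟨j, hj⟩ := hroot τ β hβpow
      have hcom : σ (τ β) = τ (σ β) := by
        have := hcomm σ τ
        have h1 := congrArg (fun f : E ≃ₐ[K] E => f β) this
        simpa using h1
      rw [hσβ, hj, map_mul, map_zpow₀, hgz, hσβ, ← zpow_mul] at hcom
      -- hcom : ζ ^ (g * j) * β = ζ ^ j * β
      have h2 : ζ ^ ((g : ℤ) * j) = ζ ^ j := by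
        have := mul_right_cancel₀ hβne hcom
        exact this
      have h3 := hzne _ _ h2
      have hj0 : ((j : ZMod ℓ)) = 0 := by
        push_cast at h3
        have hgne1' : ((g : ℕ) : ZMod ℓ) ≠ 1 := by
          intro hh
          exact hgne1 (by push_cast; exact hh)
        have h4 : (((g : ℕ) : ZMod ℓ) - 1) * (j : ZMod ℓ) = 0 := by linear_combination h3
        rcases mul_eq_zero.mp h4 with h5 | h5
        · exact absurd (by linear_combination h5) hgne1'
        · exact h5
      have h5 : ζ ^ j = ζ ^ (0 : ℤ) := hzeq j 0 (by rw [hj0]; push_cast; ring)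
      rw [hj, h5, zpow_zero, one_mul]
    -- β is in K, so a is an ℓ-th power: contradiction
    obtain ⟨b, hb⟩ := hfix β hτβ
    have hbne : b ≠ 0 := by
      intro h
      rw [h, map_zero] at hb
      exact hβne hb.symm
    have hba : b ^ ℓ = (a : K) := by
      apply (algebraMap K E).injective
      rw [map_pow, hb, hβpow]
    refine ha ⟨1, Units.mk0 b hbne, 0, by simp, ?_⟩
    ext
    rw [Units.val_mul, Units.val_pow_eq_pow_val, Units.val_mk0, Units.val_one,
      mul_one, hba]
end

section
/- Let K be a number field and ℓ a prime number; assume that ℓ is odd or that a primitive 4th root of unity lies in K. Let a_1,…,a_r be strongly ℓ-independent elements of K^×, let x_1,…,x_r be integers and n ≥ 0 an integer. If the product a_1^{x_1}⋯a_r^{x_r} is an ℓ^n-th power in K^×, then each x_i is divisible by ℓ^n. -/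
open NumberField IsDedekindDomain IntermediateField

set_option synthInstance.maxHeartbeats 1000000
set_option maxHeartbeats 1000000

theorem stmt9_aux (K : Type) [Field K] (ℓ : ℕ)
    (r : ℕ) (a : Fin r → Kˣ) (ha : StronglyIndep K ℓ a) :
    ∀ (n : ℕ) (x : Fin r → ℤ) (b ζ : Kˣ) (k : ℕ),
      ζ ^ ℓ ^ k = 1 → b ^ ℓ ^ n = ζ * ∏ i, a i ^ x i → ∀ i, (ℓ : ℤ) ^ n ∣ x i := by
  intro n
  induction n with
  | zero => intro x b ζ k _ _ i; simpa using Dvd.intro _ rfl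
  | succ n ih =>
    intro x b ζ k hζ hb i
    have hdvd : ∀ j, (ℓ : ℤ) ∣ x j := by
      by_contra h
      push_neg at h
      obtain ⟨j, hj⟩ := h
      apply ha x ⟨j, hj⟩
      refine ⟨ζ, b ^ ℓ ^ n, k, hζ, ?_⟩
      rw [← pow_mul, ← pow_succ] at *
      rw [mul_comm, ← hb]
    choose y hy using hdvd
    set η : Kˣ := b ^ ℓ ^ n * (∏ i, a i ^ y i)⁻¹ with hη
    have hηℓ : η ^ ℓ = ζ := by
      have h1 : (b ^ ℓ ^ n) ^ ℓ = ζ * (∏ i, a i ^ y i) ^ ℓ := by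
        rw [← pow_mul, ← pow_succ, hb]
        congr 1
        rw [← Finset.prod_pow]
        refine Finset.prod_congr rfl fun j _ => ?_
        rw [hy j, ← zpow_natCast (a j ^ y j) ℓ, ← zpow_mul, mul_comm]
      rw [hη, mul_pow, inv_pow, h1]
      group
    have hηk : η ^ ℓ ^ (k + 1) = 1 := by
      rw [pow_succ', pow_mul, hηℓ, hζ]
    have hb' : b ^ ℓ ^ n = η * ∏ i, a i ^ y i := by
      rw [hη, mul_assoc, inv_mul_cancel, mul_one]
    have := ih y b η (k + 1) hηk hb' i
    rw [hy i, pow_succ']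
    exact mul_dvd_mul_left (ℓ : ℤ) this

/-- if `ℓ` is odd or `ζ_4 ∈ K`, and `a 0, …, a (r-1)` are strongly
`ℓ`-independent elements of `Kˣ`, then `∏ a i ^ x i` being an `ℓ^n`-th power in `Kˣ`
forces `ℓ^n ∣ x i` for every `i`. -/
theorem stmt9 (K : Type) [Field K] [NumberField K] (ℓ : ℕ) (hℓ : ℓ.Prime)
    (hcase : Odd ℓ ∨ ∃ ζ : K, IsPrimitiveRoot ζ 4)
    (r : ℕ) (a : Fin r → Kˣ) (ha : StronglyIndep K ℓ a)
    (x : Fin r → ℤ) (n : ℕ)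
    (hpow : ∃ b : Kˣ, b ^ ℓ ^ n = ∏ i, a i ^ x i) :
    ∀ i, (ℓ : ℤ) ^ n ∣ x i := by
  obtain ⟨b, hb⟩ := hpow
  exact stmt9_aux K ℓ r a ha n x b 1 0 (by simp) (by rw [one_mul, hb])
end

section
/- Let K be a number field, ℓ a prime number, and 𝒢 a finitely generated subgroup of K^×. Then there exists a positive integer m with the following property: for every nonnegative integer n and every x ∈ K^× with x^{ℓ^n} ∈ 𝒢, one has x^{ℓ^m} ∈ 𝒢. -/
open NumberField IsDedekindDomain IntermediateField

set_option synthInstance.maxHeartbeats 1000000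
set_option maxHeartbeats 1000000

noncomputable section Stmt10Aux

open FractionalIdeal
open scoped nonZeroDivisors

namespace Stmt10Aux

variable (K : Type) [Field K] [NumberField K]

/-- The `v`-adic valuation of a unit of `K`, via fractional ideal counts. -/
def cnt (v : HeightOneSpectrum (𝓞 K)) (x : Kˣ) : ℤ :=
  FractionalIdeal.count K v (spanSingleton (𝓞 K)⁰ (x : K))

variable {K}

lemma span_ne_zero (x : Kˣ) :
    spanSingleton (𝓞 K)⁰ (x : K) ≠ (0 : FractionalIdeal (𝓞 K)⁰ K) :=
  spanSingleton_ne_zero_iff.mpr (Units.ne_zero x)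

lemma cnt_mul (v : HeightOneSpectrum (𝓞 K)) (x y : Kˣ) :
    cnt K v (x * y) = cnt K v x + cnt K v y := by
  simp only [cnt, Units.val_mul, ← spanSingleton_mul_spanSingleton]
  rw [FractionalIdeal.count_mul K v (span_ne_zero x) (span_ne_zero y)]

lemma cnt_one (v : HeightOneSpectrum (𝓞 K)) : cnt K v 1 = 0 := by
  simp only [cnt, Units.val_one, spanSingleton_one]
  exact FractionalIdeal.count_one K v

lemma cnt_pow (v : HeightOneSpectrum (𝓞 K)) (k : ℕ) (x : Kˣ) :
    cnt K v (x ^ k) = (k : ℤ) * cnt K v x := by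
  simp only [cnt, Units.val_pow_eq_pow_val, ← spanSingleton_pow]
  exact FractionalIdeal.count_pow K v k _

lemma cnt_finite (x : Kˣ) :
    {v : HeightOneSpectrum (𝓞 K) | cnt K v x ≠ 0}.Finite := by
  simpa only [cnt, ne_eq] using
    Filter.eventually_cofinite.mp
      (FractionalIdeal.finite_factors (spanSingleton (𝓞 K)⁰ (x : K)))

lemma exists_algebraMap (y : Kˣ) (hy : ∀ v, cnt K v y = 0) :
    ∃ r : 𝓞 K, algebraMap (𝓞 K) K r = (y : K) := by
  have h1 : spanSingleton (𝓞 K)⁰ ((y : Kˣ) : K) = 1 := by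
    have hfac := FractionalIdeal.finprod_heightOneSpectrum_factorization' (K := K) (span_ne_zero y)
    rw [← hfac]
    have hc : ∀ v : HeightOneSpectrum (𝓞 K),
        (v.asIdeal : FractionalIdeal (𝓞 K)⁰ K) ^
          (FractionalIdeal.count K v (spanSingleton (𝓞 K)⁰ ((y : Kˣ) : K))) = 1 := by
      intro v
      have := hy v
      simp only [cnt] at this
      rw [this, zpow_zero]
    rw [finprod_congr hc, finprod_one]
  have hmem := mem_spanSingleton_self (𝓞 K)⁰ ((y : Kˣ) : K)
  rw [h1] at hmem
  exact (FractionalIdeal.mem_one_iff _).mp hmem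

lemma cnt_inv (v : HeightOneSpectrum (𝓞 K)) (x : Kˣ) : cnt K v x⁻¹ = - cnt K v x := by
  have h0 : cnt K v (x * x⁻¹) = 0 := by rw [mul_inv_cancel]; exact cnt_one v
  rw [cnt_mul] at h0
  omega

lemma exists_unit (x : Kˣ) (hx : ∀ v, cnt K v x = 0) :
    ∃ u : (𝓞 K)ˣ, Units.map (algebraMap (𝓞 K) K : (𝓞 K) →* K) u = x := by
  obtain ⟨r, hr⟩ := exists_algebraMap x hx
  obtain ⟨s, hs⟩ := exists_algebraMap x⁻¹ (fun v => by rw [cnt_inv, hx v, neg_zero])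
  have hrs : r * s = 1 := by
    have h : algebraMap (𝓞 K) K (r * s) = algebraMap (𝓞 K) K 1 := by
      rw [_root_.map_mul, _root_.map_one, hr, hs]
      exact_mod_cast Units.mul_inv x
    exact FaithfulSMul.algebraMap_injective (𝓞 K) K h
  refine ⟨Units.mkOfMulEqOne r s hrs, Units.ext ?_⟩
  simpa using hr

end Stmt10Aux

end Stmt10Aux


/-- for a finitely generated subgroup `𝒢` of `Kˣ` there is a positive
integer `m` such that any `x ∈ Kˣ` with `x ^ ℓ ^ n ∈ 𝒢` for some `n ≥ 0` satisfies
`x ^ ℓ ^ m ∈ 𝒢`. -/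
theorem stmt10 (K : Type) [Field K] [NumberField K] (ℓ : ℕ) (hℓ : ℓ.Prime)
    (𝒢 : Subgroup Kˣ) (hfg : 𝒢.FG) :
    ∃ m : ℕ, 0 < m ∧ ∀ (n : ℕ) (x : Kˣ), x ^ ℓ ^ n ∈ 𝒢 → x ^ ℓ ^ m ∈ 𝒢 := by
  classical
  obtain ⟨T, hT⟩ := hfg
  -- the "ℓ-division group" of 𝒢 in Kˣ
  let H : Subgroup Kˣ :=
    { carrier := {x : Kˣ | ∃ n : ℕ, x ^ ℓ ^ n ∈ 𝒢}
      one_mem' := ⟨0, by simpa using 𝒢.one_mem⟩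
      mul_mem' := by
        rintro x y ⟨a, hx⟩ ⟨b, hy⟩
        refine ⟨a + b, ?_⟩
        have hx' : x ^ ℓ ^ (a + b) ∈ 𝒢 := by
          rw [pow_add, pow_mul]; exact 𝒢.pow_mem hx _
        have hy' : y ^ ℓ ^ (a + b) ∈ 𝒢 := by
          rw [pow_add, mul_comm, pow_mul]; exact 𝒢.pow_mem hy _
        rw [mul_pow]; exact 𝒢.mul_mem hx' hy'
      inv_mem' := by
        rintro x ⟨a, hx⟩
        exact ⟨a, by rw [inv_pow]; exact 𝒢.inv_mem hx⟩ }
  -- the finite set of bad primes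
  let S : Set (HeightOneSpectrum (𝓞 K)) := ⋃ g ∈ (T : Set Kˣ), {v | Stmt10Aux.cnt K v g ≠ 0}
  have hSfin : S.Finite :=
    Set.Finite.biUnion T.finite_toSet (fun g _ => Stmt10Aux.cnt_finite g)
  -- the S-unit subgroup
  let V : Subgroup Kˣ :=
    { carrier := {x : Kˣ | ∀ v ∉ S, Stmt10Aux.cnt K v x = 0}
      one_mem' := fun v _ => Stmt10Aux.cnt_one v
      mul_mem' := by
        intro x y hx hy v hv
        rw [Stmt10Aux.cnt_mul, hx v hv, hy v hv, add_zero]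
      inv_mem' := by
        intro x hx v hv
        rw [Stmt10Aux.cnt_inv, hx v hv, neg_zero] }
  have h𝒢V : 𝒢 ≤ V := by
    rw [← hT]
    refine (Subgroup.closure_le V).mpr ?_
    intro g hg
    show ∀ v ∉ S, Stmt10Aux.cnt K v g = 0
    intro v hv
    by_contra h
    exact hv (Set.mem_biUnion hg h)
  have hHV : ∀ x ∈ H, ∀ v ∉ S, Stmt10Aux.cnt K v x = 0 := by
    rintro x ⟨n, hxn⟩ v hv
    have h2 : Stmt10Aux.cnt K v (x ^ ℓ ^ n) = 0 := h𝒢V hxn v hv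
    rw [Stmt10Aux.cnt_pow] at h2
    have hl : ((ℓ ^ n : ℕ) : ℤ) ≠ 0 :=
      Int.natCast_ne_zero.mpr (pow_ne_zero n hℓ.ne_zero)
    exact (mul_eq_zero.mp h2).resolve_left hl
  -- finite generation of H
  haveI : Finite (S : Set _) := hSfin.to_subtype
  let f0 : Additive Kˣ →+ (S → ℤ) :=
    { toFun := fun x v => Stmt10Aux.cnt K v.1 (Additive.toMul x)
      map_zero' := funext fun v => Stmt10Aux.cnt_one v.1
      map_add' := fun x y => funext fun v => Stmt10Aux.cnt_mul v.1 _ _ }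
  let f := f0.toIntLinearMap
  let H' : Submodule ℤ (Additive Kˣ) := (Subgroup.toAddSubgroup H).toIntSubmodule
  have hH'fg : H'.FG := by
    refine Submodule.fg_of_fg_map_of_fg_inf_ker f ?_ ?_
    · exact IsNoetherian.noetherian _
    · let j : Additive (𝓞 K)ˣ →ₗ[ℤ] Additive Kˣ :=
        (MonoidHom.toAdditive (Units.map (algebraMap (𝓞 K) K : (𝓞 K) →* K))).toIntLinearMap
      have hle : H' ⊓ LinearMap.ker f ≤ LinearMap.range j := by
        rintro x ⟨hx1, hx2⟩
        have hall : ∀ v, Stmt10Aux.cnt K v (Additive.toMul x) = 0 := by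
          intro v
          by_cases hv : v ∈ S
          · exact congrFun (LinearMap.mem_ker.mp hx2) ⟨v, hv⟩
          · exact hHV _ hx1 v hv
        obtain ⟨u, hu⟩ := Stmt10Aux.exists_unit (Additive.toMul x) hall
        exact ⟨Additive.ofMul u, congrArg Additive.ofMul hu⟩
      have heq : Submodule.map j ((H' ⊓ LinearMap.ker f).comap j) = H' ⊓ LinearMap.ker f := by
        rw [Submodule.map_comap_eq]
        exact inf_eq_right.mpr hle
      rw [← heq]
      exact Submodule.FG.map _ (IsNoetherian.noetherian _)
  have hHadd : (Subgroup.toAddSubgroup H).FG := by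
    have h := (Submodule.fg_iff_addSubgroup_fg H').mp hH'fg
    rwa [AddSubgroup.toIntSubmodule_toAddSubgroup] at h
  have hHfg : H.FG := (Subgroup.fg_iff_add_fg H).mpr hHadd
  obtain ⟨T', hT'⟩ := hHfg
  have hmemH : ∀ t ∈ T', ∃ n : ℕ, t ^ ℓ ^ n ∈ 𝒢 := by
    intro t ht
    have : t ∈ H := by rw [← hT']; exact Subgroup.subset_closure ht
    exact this
  choose! nf hnf using hmemH
  refine ⟨T'.sup nf + 1, Nat.succ_pos _, ?_⟩
  intro n x hx
  have hxH : x ∈ H := ⟨n, hx⟩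
  have hcl : H ≤ 𝒢.comap (powMonoidHom (ℓ ^ (T'.sup nf + 1))) := by
    rw [← hT']
    refine (Subgroup.closure_le _).mpr ?_
    intro t ht
    have ht' : t ∈ T' := ht
    have h1 : t ^ ℓ ^ nf t ∈ 𝒢 := hnf t ht'
    have h2 : nf t ≤ T'.sup nf + 1 := le_trans (Finset.le_sup ht') (Nat.le_succ _)
    show powMonoidHom (ℓ ^ (T'.sup nf + 1)) t ∈ 𝒢
    have hpow : t ^ ℓ ^ (T'.sup nf + 1) = (t ^ ℓ ^ nf t) ^ ℓ ^ (T'.sup nf + 1 - nf t) := by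
      rw [← pow_mul, ← pow_add, Nat.add_sub_cancel' h2]
    simpa [powMonoidHom_apply, hpow] using 𝒢.pow_mem h1 (ℓ ^ (T'.sup nf + 1 - nf t))
  simpa [Subgroup.mem_comap, powMonoidHom_apply] using hcl hxH
end

section
/- Let K be a number field, ℓ a prime number, and G a torsion-free finitely generated subgroup of K^× of rank r > 0; set z = v_ℓ(#(torsion subgroup of K^×)). Suppose G is generated by b_1,…,b_r where b_i = B_i^{ℓ^{d_i}}ζ_i, the B_1,…,B_r ∈ K^× are strongly ℓ-independent, and ζ_i ∈ K is a root of unity of order ℓ^{h_i}. Let n ≥ 0, write δ_i = max(n - d_i, 0), set G_n = G ∩ (K^×)^{ℓ^n}, and let H_n be the subgroup of G/G_n generated by the classes of b_1^{ℓ^{δ_1}},…,b_r^{ℓ^{δ_r}}. Then: (i) H_n is a finite cyclic ℓ-group whose order has ℓ-adic valuation max(h_1-δ_1,…,h_r-δ_r, z-n, 0) + min(n-z, 0); and (ii) the quotient (G/G_n)/H_n is isomorphic to the direct sum over i = 1,…,r of ℤ/ℓ^{δ_i}ℤ. -/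
open NumberField IsDedekindDomain IntermediateField

set_option synthInstance.maxHeartbeats 1000000
set_option maxHeartbeats 1000000

set_option linter.unusedVariables false
set_option linter.unnecessarySimpa false
set_option linter.deprecated false

section Helpers

open Subgroup

variable {K : Type} [Field K] {r : ℕ}

/-- The homomorphism `ℤ^r → Kˣ` sending `x` to `∏ c i ^ x i`. -/
def phiHom (c : Fin r → Kˣ) : Multiplicative (Fin r → ℤ) →* Kˣ :=
  MonoidHom.mk' (fun x => ∏ i, c i ^ (Multiplicative.toAdd x i)) (by
    intro x y
    simp [zpow_add, Finset.prod_mul_distrib])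

lemma phiHom_apply (c : Fin r → Kˣ) (x : Multiplicative (Fin r → ℤ)) :
    phiHom c x = ∏ i, c i ^ (Multiplicative.toAdd x i) := rfl

lemma phiHom_range (c : Fin r → Kˣ) :
    (phiHom c).range = Subgroup.closure (Set.range c) := by
  apply le_antisymm
  · rintro y hy
    obtain ⟨x, rfl⟩ := MonoidHom.mem_range.mp hy
    rw [phiHom_apply]
    exact Subgroup.prod_mem (Subgroup.closure (Set.range c)) fun i _ =>
      Subgroup.zpow_mem (Subgroup.closure (Set.range c))
        (Subgroup.subset_closure (Set.mem_range_self i)) _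
  · rw [Subgroup.closure_le]
    rintro _ ⟨i, rfl⟩
    refine MonoidHom.mem_range.mpr ⟨Multiplicative.ofAdd (Pi.single i 1), ?_⟩
    rw [phiHom_apply]
    rw [Fintype.prod_eq_single i (fun j hj => by
      simp [Pi.single_apply, if_neg hj])]
    simp

lemma phiHom_pow (c : Fin r → Kˣ) (k : Fin r → ℕ) (x : Multiplicative (Fin r → ℤ)) :
    phiHom (fun i => c i ^ k i) x
      = phiHom c (Multiplicative.ofAdd fun i => (k i : ℤ) * Multiplicative.toAdd x i) := by
  simp only [phiHom_apply]
  refine Finset.prod_congr rfl fun i _ => ?_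
  rw [← zpow_natCast (c i) (k i), ← zpow_mul]
  simp

lemma sindep_pow {ℓ : ℕ} (hℓ : ℓ.Prime) {B : Fin r → Kˣ} (hB : StronglyIndep K ℓ B) :
    ∀ (m : ℕ) (x : Fin r → ℤ) (u c : Kˣ), (∃ k, u ^ ℓ ^ k = 1) →
      (∏ i, B i ^ x i) * u = c ^ ℓ ^ m → ∀ i, (ℓ : ℤ) ^ m ∣ x i := by
  intro m
  induction m with
  | zero => intro x u c _ _ i; simpa using one_dvd _
  | succ m ih =>
    intro x u c hu heq i
    obtain ⟨k, hk⟩ := hu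
    have hdvd : ∀ j, (ℓ : ℤ) ∣ x j := by
      by_contra hcon
      push_neg at hcon
      obtain ⟨j, hj⟩ := hcon
      exact hB x ⟨j, hj⟩ ⟨u, c ^ ℓ ^ m, k, hk, by rw [heq, ← pow_mul, ← pow_succ]⟩
    set y : Fin r → ℤ := fun j => x j / ℓ with hy
    have hxy : ∀ j, x j = ℓ * y j := fun j => (Int.mul_ediv_cancel' (hdvd j)).symm
    have hprod : (∏ i, B i ^ x i) = (∏ i, B i ^ y i) ^ ℓ := by
      rw [← Finset.prod_pow]
      refine Finset.prod_congr rfl fun j _ => ?_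
      rw [← zpow_natCast (B j ^ y j) ℓ, ← zpow_mul, mul_comm, ← hxy j]
    have h1 : (∏ i, B i ^ y i) * (c ^ ℓ ^ m * (∏ i, B i ^ y i)⁻¹) = c ^ ℓ ^ m := by
      rw [mul_comm]; exact inv_mul_cancel_right _ _
    have h2 : (c ^ ℓ ^ m * (∏ i, B i ^ y i)⁻¹) ^ ℓ = u := by
      have hc : (∏ i, B i ^ y i) ^ ℓ * u = (c ^ ℓ ^ m) ^ ℓ := by
        rw [← hprod, heq, ← pow_mul, ← pow_succ]
      rw [mul_pow, inv_pow, ← hc, mul_comm ((∏ i, B i ^ y i) ^ ℓ) u, mul_inv_cancel_right]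
    have h3 : ∃ k', (c ^ ℓ ^ m * (∏ i, B i ^ y i)⁻¹) ^ ℓ ^ k' = 1 :=
      ⟨k + 1, by rw [pow_succ', pow_mul, h2, hk]⟩
    obtain ⟨t, ht⟩ := ih y (c ^ ℓ ^ m * (∏ i, B i ^ y i)⁻¹) c h3 h1 i
    exact ⟨t, by rw [hxy i, ht, pow_succ]; ring⟩

lemma closure_pow_eq_one {Γ : Type*} [CommGroup Γ] {ι : Type*} {c : ι → Γ} {e : ℕ}
    (hc : ∀ i, c i ^ e = 1) : ∀ t ∈ Subgroup.closure (Set.range c), t ^ e = 1 := by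
  intro t ht
  refine Subgroup.closure_induction ?_ ?_ ?_ ?_ ht
  · rintro x ⟨i, rfl⟩; exact hc i
  · exact one_pow e
  · intro a b _ _ ha hb; rw [mul_pow, ha, hb, mul_one]
  · intro a _ ha; rw [inv_pow, ha, inv_one]

lemma gcd_pow_pow (p a b : ℕ) : Nat.gcd (p ^ a) (p ^ b) = p ^ min a b := by
  rcases le_total a b with hle | hle
  · rw [min_eq_left hle, Nat.gcd_eq_left (pow_dvd_pow p hle)]
  · rw [min_eq_right hle, Nat.gcd_comm, Nat.gcd_eq_left (pow_dvd_pow p hle)]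

lemma card_pow_ker {Γ : Type*} [CommGroup Γ] [Finite Γ] [IsCyclic Γ] {p M w : ℕ}
    (hp : p.Prime) (hM : Nat.card Γ = p ^ M) :
    Nat.card ((powMonoidHom (p ^ w) : Γ →* Γ).ker) = p ^ min M w := by
  obtain ⟨g, hg⟩ := IsCyclic.exists_generator (α := Γ)
  have horder : orderOf g = p ^ M := (orderOf_eq_card_of_forall_mem_zpowers hg).trans hM
  set kK := (powMonoidHom (p ^ w) : Γ →* Γ).ker with hkK
  haveI : IsCyclic ↥kK := Subgroup.isCyclic _
  obtain ⟨gk, hgk⟩ := IsCyclic.exists_generator (α := ↥kK)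
  have h1 : Nat.card ↥kK = orderOf gk := (orderOf_eq_card_of_forall_mem_zpowers hgk).symm
  have h2 : orderOf (gk : Γ) = orderOf gk :=
    orderOf_injective kK.subtype Subtype.coe_injective gk
  have h3 : (gk : Γ) ^ (p ^ w) = 1 := gk.2
  have h4 : orderOf gk ∣ p ^ w := by rw [← h2]; exact orderOf_dvd_of_pow_eq_one h3
  have h5 : orderOf gk ∣ p ^ M := by
    rw [← hM]
    exact (orderOf_dvd_natCard gk).trans (Subgroup.card_subgroup_dvd_card kK)
  have hupper : Nat.card ↥kK ∣ p ^ min M w := by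
    rw [h1]
    obtain ⟨j, hj, hje⟩ := (Nat.dvd_prime_pow hp).mp h4
    have hjM : j ≤ M := (Nat.pow_dvd_pow_iff_le_right hp.one_lt).mp (hje ▸ h5)
    rw [hje]
    exact pow_dvd_pow p (le_min hjM hj)
  have hy1 : g ^ (p ^ (M - min M w)) ∈ kK := by
    show powMonoidHom (p ^ w) (g ^ p ^ (M - min M w)) = 1
    rw [powMonoidHom_apply, ← pow_mul, ← pow_add]
    refine orderOf_dvd_iff_pow_eq_one.mp ?_
    rw [horder]
    exact pow_dvd_pow p (by have := min_le_right M w; omega)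
  have hy2 : orderOf (⟨g ^ (p ^ (M - min M w)), hy1⟩ : ↥kK) = p ^ min M w := by
    rw [← orderOf_injective kK.subtype Subtype.coe_injective
      (⟨g ^ (p ^ (M - min M w)), hy1⟩ : ↥kK)]
    show orderOf (g ^ p ^ (M - min M w)) = p ^ min M w
    rw [orderOf_pow, horder, Nat.gcd_comm, gcd_pow_pow,
      min_eq_left (Nat.sub_le M (min M w)),
      Nat.pow_div (Nat.sub_le M (min M w)) hp.pos]
    congr 1
    have := min_le_left M w
    omega
  have hlower : p ^ min M w ∣ Nat.card ↥kK := hy2 ▸ orderOf_dvd_natCard _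
  exact Nat.dvd_antisymm hupper hlower

lemma card_closure_pow_orders {p : ℕ} (hp : p.Prime) (hr : 0 < r)
    (c : Fin r → Kˣ) (m : Fin r → ℕ) (hord : ∀ i, orderOf (c i) = p ^ m i)
    (hfin : Finite ↥(Subgroup.closure (Set.range c))) :
    Nat.card ↥(Subgroup.closure (Set.range c)) = p ^ (Finset.univ.sup m) := by
  set S := Subgroup.closure (Set.range c) with hS
  set M := Finset.univ.sup m with hMdef
  have hpow : ∀ t ∈ S, t ^ p ^ M = 1 := by
    refine closure_pow_eq_one fun i => ?_
    refine orderOf_dvd_iff_pow_eq_one.mp ?_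
    rw [hord i]
    exact pow_dvd_pow p (Finset.le_sup (Finset.mem_univ i))
  haveI : IsCyclic ↥S := subgroup_units_cyclic _
  obtain ⟨g, hg⟩ := IsCyclic.exists_generator (α := ↥S)
  have h1 : orderOf g = Nat.card ↥S := orderOf_eq_card_of_forall_mem_zpowers hg
  have h2 : Nat.card ↥S ∣ p ^ M := by
    rw [← h1, ← orderOf_injective S.subtype Subtype.coe_injective g]
    exact orderOf_dvd_of_pow_eq_one (hpow _ g.2)
  have h3 : p ^ M ∣ Nat.card ↥S := by
    obtain ⟨i0, _, hi0⟩ := Finset.exists_mem_eq_sup Finset.univ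
      ⟨⟨0, hr⟩, Finset.mem_univ _⟩ m
    have hmem : c i0 ∈ S := Subgroup.subset_closure (Set.mem_range_self i0)
    have horr : orderOf (⟨c i0, hmem⟩ : ↥S) = p ^ m i0 := by
      rw [← hord i0, ← orderOf_injective S.subtype Subtype.coe_injective
        (⟨c i0, hmem⟩ : ↥S)]
      rfl
    rw [hMdef, hi0, ← horr]
    exact orderOf_dvd_natCard _
  exact Nat.dvd_antisymm h2 h3

end Helpers

section TorsionHelpers

variable (K : Type) [Field K] [NumberField K]

lemma torsion_units_finite : Finite (CommGroup.torsion Kˣ) := by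
  have h : ((CommGroup.torsion Kˣ : Subgroup Kˣ) : Set Kˣ).Finite := by
    have him : Set.Finite ((fun u : Kˣ => (u : K)) ''
        ((CommGroup.torsion Kˣ : Subgroup Kˣ) : Set Kˣ)) := by
      refine (NumberField.Embeddings.finite_of_norm_le K ℂ 1).subset ?_
      rintro _ ⟨u, hu, rfl⟩
      obtain ⟨k, hk, hk1⟩ := isOfFinOrder_iff_pow_eq_one.mp hu
      have hx : ((u : K)) ^ k = 1 := by
        rw [← Units.val_pow_eq_pow_val, hk1, Units.val_one]
      constructor
      · exact ⟨Polynomial.X ^ k - Polynomial.C 1,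
          Polynomial.monic_X_pow_sub_C 1 hk.ne', by simp [hx]⟩
      · intro φ
        have h1 : ‖φ (u : K)‖ ^ k = 1 := by
          rw [← norm_pow, ← map_pow, hx, map_one, norm_one]
        by_contra hcon
        push_neg at hcon
        exact absurd h1 (ne_of_gt (one_lt_pow₀ hcon hk.ne'))
    have hinj : Set.InjOn (fun u : Kˣ => (u : K))
        ((CommGroup.torsion Kˣ : Subgroup Kˣ) : Set Kˣ) :=
      fun a _ b _ hab => Units.ext hab
    exact Set.Finite.of_finite_image him hinj
  exact h.to_subtype

lemma pow_torsion_le {ℓ : ℕ} (hℓ : ℓ.Prime) {u : Kˣ} {k : ℕ} (hu : u ^ ℓ ^ k = 1) :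
    u ^ ℓ ^ padicValNat ℓ (Nat.card (CommGroup.torsion Kˣ)) = 1 := by
  haveI := torsion_units_finite K
  have hT0 : Nat.card (CommGroup.torsion Kˣ) ≠ 0 := Nat.card_pos.ne'
  have humem : u ∈ CommGroup.torsion Kˣ :=
    isOfFinOrder_iff_pow_eq_one.mpr ⟨ℓ ^ k, pow_pos hℓ.pos k, hu⟩
  have h1 : orderOf u ∣ ℓ ^ k := orderOf_dvd_of_pow_eq_one hu
  have h2 : orderOf u ∣ Nat.card (CommGroup.torsion Kˣ) :=
    Subgroup.orderOf_dvd_natCard _ humem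
  obtain ⟨j, hj, hju⟩ := (Nat.dvd_prime_pow hℓ).mp h1
  rw [hju] at h2
  have hjz : j ≤ padicValNat ℓ (Nat.card (CommGroup.torsion Kˣ)) := by
    rw [← Nat.factorization_def _ hℓ]
    exact (hℓ.pow_dvd_iff_le_factorization hT0).mp h2
  refine orderOf_dvd_iff_pow_eq_one.mp ?_
  rw [hju]
  exact pow_dvd_pow ℓ hjz

lemma exists_pow_eq {ℓ : ℕ} (hℓ : ℓ.Prime) (n : ℕ) {t : Kˣ}
    (ht : t ^ ℓ ^ (padicValNat ℓ (Nat.card (CommGroup.torsion Kˣ)) - n) = 1) :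
    ∃ c : Kˣ, c ^ ℓ ^ n = t := by
  haveI := torsion_units_finite K
  set z := padicValNat ℓ (Nat.card (CommGroup.torsion Kˣ)) with hz
  by_cases hnz : z ≤ n
  · have ht1 : t = 1 := by simpa [Nat.sub_eq_zero_of_le hnz] using ht
    exact ⟨1, by simp [ht1]⟩
  · push_neg at hnz
    haveI : IsCyclic ↥(CommGroup.torsion Kˣ) := subgroup_units_cyclic _
    have hT0 : Nat.card ↥(CommGroup.torsion Kˣ) ≠ 0 := Nat.card_pos.ne'
    obtain ⟨g, hg⟩ := IsCyclic.exists_generator (α := ↥(CommGroup.torsion Kˣ))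
    have horder : orderOf g = Nat.card ↥(CommGroup.torsion Kˣ) :=
      orderOf_eq_card_of_forall_mem_zpowers hg
    have htT : t ∈ CommGroup.torsion Kˣ :=
      isOfFinOrder_iff_pow_eq_one.mpr ⟨ℓ ^ (z - n), pow_pos hℓ.pos _, ht⟩
    obtain ⟨a, ha⟩ := Subgroup.mem_zpowers_iff.mp (hg ⟨t, htT⟩)
    set Q := Nat.card ↥(CommGroup.torsion Kˣ) / ℓ ^ z with hQ
    have hQdvd : ℓ ^ z * Q = Nat.card ↥(CommGroup.torsion Kˣ) := by
      have h := Nat.ordProj_mul_ordCompl_eq_self (Nat.card ↥(CommGroup.torsion Kˣ)) ℓ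
      rwa [Nat.factorization_def _ hℓ, ← hz] at h
    have hdvd1 : ((Nat.card ↥(CommGroup.torsion Kˣ) : ℕ) : ℤ) ∣ a * ℓ ^ (z - n) := by
      rw [← horder]
      refine orderOf_dvd_iff_zpow_eq_one.mpr ?_
      rw [zpow_mul, ha]
      have hsub : ((⟨t, htT⟩ : ↥(CommGroup.torsion Kˣ)) ^ (ℓ ^ (z - n) : ℕ)) = 1 :=
        Subtype.ext (by simpa using ht)
      rw [show ((ℓ : ℤ) ^ (z - n)) = ((ℓ ^ (z - n) : ℕ) : ℤ) by push_cast; ring,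
        zpow_natCast]
      exact hsub
    have hfact : (((ℓ : ℤ) ^ n * Q) * ℓ ^ (z - n)) ∣ a * ℓ ^ (z - n) := by
      have hexp : (ℓ : ℤ) ^ n * (Q : ℤ) * ℓ ^ (z - n) = ((ℓ ^ z * Q : ℕ) : ℤ) := by
        push_cast
        rw [show (ℓ : ℤ) ^ n * Q * ℓ ^ (z - n) = (ℓ : ℤ) ^ (n + (z - n)) * Q by
          rw [pow_add]; ring]
        congr 2
        omega
      rw [hexp, hQdvd]
      exact hdvd1
    have hdvd2 : ((ℓ : ℤ) ^ n * Q) ∣ a := by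
      have hne : ((ℓ : ℤ) ^ (z - n)) ≠ 0 := pow_ne_zero _ (by exact_mod_cast hℓ.ne_zero)
      exact (mul_dvd_mul_iff_right hne).mp hfact
    obtain ⟨a', ha'⟩ := hdvd2
    refine ⟨((g ^ ((Q : ℤ) * a') : ↥(CommGroup.torsion Kˣ)) : Kˣ), ?_⟩
    have hcoe : (((g ^ ((Q : ℤ) * a') : ↥(CommGroup.torsion Kˣ)) : Kˣ)) ^ (ℓ ^ n : ℕ)
        = (((g ^ a : ↥(CommGroup.torsion Kˣ))) : Kˣ) := by
      push_cast
      rw [← zpow_natCast _ (ℓ ^ n), ← zpow_mul]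
      congr 1
      rw [ha']
      push_cast
      ring
    rw [hcoe, ha]

end TorsionHelpers

/-- structure of `G/G_n` where `G_n = G ∩ (Kˣ)^{ℓ^n}`, for `G` generated by
`b i = B i ^ ℓ ^ d i * ζ i` with `B` strongly `ℓ`-independent and `ζ i` of order `ℓ ^ h i`.
With `z = v_ℓ(#(Kˣ)_tors)` and `δ i = max (n - d i) 0`, the subgroup `H_n` of `G/G_n`
generated by the classes of the `b i ^ ℓ ^ δ i` is a finite cyclic `ℓ`-group of order
`ℓ ^ (max(h 1 - δ 1, …, h r - δ r, z - n, 0) + min (n - z) 0)`, and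
`(G/G_n)/H_n ≅ ⊕_i ℤ/ℓ^{δ i}ℤ`. -/
theorem stmt13 (K : Type) [Field K] [NumberField K] (ℓ : ℕ) (hℓ : ℓ.Prime)
    (G : Subgroup Kˣ) (r : ℕ) (hr : 0 < r)
    (hfree : Nonempty (↥G ≃* Multiplicative (Fin r → ℤ)))
    (B ζ : Fin r → Kˣ) (d h : Fin r → ℕ)
    (hB : StronglyIndep K ℓ B) (hζ : ∀ i, orderOf (ζ i) = ℓ ^ h i)
    (hG : G = Subgroup.closure (Set.range fun i => B i ^ ℓ ^ d i * ζ i))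
    (n : ℕ) :
    IsCyclic
      ↥(Subgroup.map
        (QuotientGroup.mk' ((powMonoidHom (ℓ ^ n) : Kˣ →* Kˣ).range.subgroupOf G))
        ((Subgroup.closure
          (Set.range fun i => (B i ^ ℓ ^ d i * ζ i) ^ ℓ ^ (n - d i))).subgroupOf G)) ∧
    (Nat.card
      ↥(Subgroup.map
        (QuotientGroup.mk' ((powMonoidHom (ℓ ^ n) : Kˣ →* Kˣ).range.subgroupOf G))
        ((Subgroup.closure
          (Set.range fun i => (B i ^ ℓ ^ d i * ζ i) ^ ℓ ^ (n - d i))).subgroupOf G)) : ℚ) =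
      (ℓ : ℚ) ^
        (max (Finset.univ.sup' (Finset.univ_nonempty_iff.mpr ⟨⟨0, hr⟩⟩)
            fun i => (h i : ℤ) - max ((n : ℤ) - (d i : ℤ)) 0)
          (max ((padicValNat ℓ (Nat.card ↥(CommGroup.torsion Kˣ)) : ℤ) - (n : ℤ)) 0) +
         min ((n : ℤ) - (padicValNat ℓ (Nat.card ↥(CommGroup.torsion Kˣ)) : ℤ)) 0) ∧
    Nonempty
      (((↥G ⧸ ((powMonoidHom (ℓ ^ n) : Kˣ →* Kˣ).range.subgroupOf G)) ⧸
        (Subgroup.map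
          (QuotientGroup.mk' ((powMonoidHom (ℓ ^ n) : Kˣ →* Kˣ).range.subgroupOf G))
          ((Subgroup.closure
            (Set.range fun i => (B i ^ ℓ ^ d i * ζ i) ^ ℓ ^ (n - d i))).subgroupOf G))) ≃*
        ((i : Fin r) → Multiplicative (ZMod (ℓ ^ (n - d i))))) := by
  classical
  haveI hTfin : Finite ↥(CommGroup.torsion Kˣ) := torsion_units_finite K
  set z := padicValNat ℓ (Nat.card ↥(CommGroup.torsion Kˣ)) with hzdef
  set R := (powMonoidHom (ℓ ^ n) : Kˣ →* Kˣ).range with hRdef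
  set N := R.subgroupOf G with hNdef
  set C := Subgroup.closure
      (Set.range fun i => (B i ^ ℓ ^ d i * ζ i) ^ ℓ ^ (n - d i)) with hCdef
  set Hn := (C.subgroupOf G).map (QuotientGroup.mk' N) with hHndef
  set b : Fin r → Kˣ := fun i => B i ^ ℓ ^ d i * ζ i with hbdef
  -- basic facts
  have hbG : ∀ i, b i ∈ G := by
    intro i
    rw [hG]
    exact Subgroup.subset_closure (Set.mem_range_self i)
  have hCdef' : C = Subgroup.closure (Set.range fun i => b i ^ ℓ ^ (n - d i)) := hCdef
  have hCle : C ≤ G := by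
    rw [hCdef]
    refine (Subgroup.closure_le _).mpr ?_
    rintro _ ⟨i, rfl⟩
    exact Subgroup.pow_mem G (hbG i) _
  -- the isomorphism `ℤ^r ≃ G`
  have hφrange : (phiHom b).range = G := by
    rw [phiHom_range, hbdef, ← hG]
  have hsub_e : ∀ x, phiHom b x ∈ G := by
    intro x
    rw [← hφrange]
    exact ⟨x, rfl⟩
  set eH : Multiplicative (Fin r → ℤ) →* ↥G := (phiHom b).codRestrict G hsub_e with heHdef
  have hecoe : ∀ x, ((eH x : Kˣ)) = phiHom b x := fun x => rfl
  have hesurj : Function.Surjective eH := by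
    intro g
    have hg : (g : Kˣ) ∈ (phiHom b).range := by rw [hφrange]; exact g.2
    obtain ⟨x, hx⟩ := hg
    exact ⟨x, Subtype.ext hx⟩
  have heinj : Function.Injective eH := by
    obtain ⟨F⟩ := hfree
    set π := F.toMonoidHom.comp eH with hπdef
    have hπs : Function.Surjective π := F.surjective.comp hesurj
    set La : (Fin r → ℤ) →+ (Fin r → ℤ) :=
      { toFun := fun v => Multiplicative.toAdd (π (Multiplicative.ofAdd v))
        map_zero' := by simp
        map_add' := by
          intro v w
          show Multiplicative.toAdd (π (Multiplicative.ofAdd (v + w))) = _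
          rw [ofAdd_add, map_mul]
          rfl } with hLadef
    have hLas : Function.Surjective La := by
      intro w
      obtain ⟨x, hx⟩ := hπs (Multiplicative.ofAdd w)
      exact ⟨Multiplicative.toAdd x, by simp [hLadef, hx]⟩
    have hLai : Function.Injective La.toIntLinearMap :=
      OrzechProperty.injective_of_surjective_endomorphism _ hLas
    intro a b hab
    have h1 : π a = π b := congrArg F.toMonoidHom hab
    have h2 : La (Multiplicative.toAdd a) = La (Multiplicative.toAdd b) := by
      simp only [hLadef, AddMonoidHom.coe_mk, ZeroHom.coe_mk]
      rw [ofAdd_toAdd, ofAdd_toAdd, h1]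
    exact hLai h2
  have hφinj : Function.Injective (phiHom b) := fun x y hxy => by
    have : eH x = eH y := Subtype.ext hxy
    exact heinj this
  set eE : Multiplicative (Fin r → ℤ) ≃* ↥G := MulEquiv.ofBijective eH ⟨heinj, hesurj⟩
    with heEdef
  -- arithmetic of products
  have hsplit : ∀ x : Fin r → ℤ,
      (∏ i, b i ^ x i) = (∏ i, B i ^ ((ℓ : ℤ) ^ d i * x i)) * ∏ i, ζ i ^ x i := by
    intro x
    rw [← Finset.prod_mul_distrib]
    refine Finset.prod_congr rfl fun i _ => ?_
    show (B i ^ ℓ ^ d i * ζ i) ^ x i = _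
    rw [mul_zpow, ← zpow_natCast (B i) (ℓ ^ d i), ← zpow_mul]
    congr 2
  have hupows : ∀ x : Fin r → ℤ, ∃ k, (∏ i, ζ i ^ x i) ^ ℓ ^ k = 1 := by
    intro x
    refine ⟨Finset.univ.sup h, ?_⟩
    rw [← Finset.prod_pow]
    refine Finset.prod_eq_one fun i _ => ?_
    rw [← zpow_natCast (ζ i ^ x i) (ℓ ^ Finset.univ.sup h), ← zpow_mul]
    refine orderOf_dvd_iff_zpow_eq_one.mp ?_
    rw [hζ i]
    push_cast
    exact Dvd.dvd.mul_left (pow_dvd_pow (ℓ:ℤ) (Finset.le_sup (Finset.mem_univ i))) (x i)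
  have hBpowR : ∀ y : Fin r → ℤ, (∀ i, (ℓ : ℤ) ^ n ∣ y i) → (∏ i, B i ^ y i) ∈ R := by
    intro y hy
    have hfac : ∀ i, B i ^ y i = (B i ^ (y i / (ℓ : ℤ) ^ n)) ^ (ℓ ^ n : ℕ) := by
      intro i
      rw [← zpow_natCast _ (ℓ ^ n), ← zpow_mul]
      congr 1
      push_cast
      rw [Int.ediv_mul_cancel (hy i)]
    have hall : (∏ i, B i ^ y i) = (∏ i, B i ^ (y i / (ℓ:ℤ) ^ n)) ^ (ℓ ^ n : ℕ) := by
      rw [← Finset.prod_pow]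
      exact Finset.prod_congr rfl fun i _ => hfac i
    rw [hRdef, hall]
    exact MonoidHom.mem_range.mpr ⟨∏ i, B i ^ (y i / (ℓ:ℤ) ^ n),
      by rw [powMonoidHom_apply]⟩
  have hmemR : ∀ x : Fin r → ℤ,
      ((∏ i, b i ^ x i) ∈ R ↔
        (∀ i, (ℓ : ℤ) ^ (n - d i) ∣ x i) ∧ (∏ i, ζ i ^ x i) ∈ R) := by
    intro x
    constructor
    · intro hx
      obtain ⟨c, hc⟩ := MonoidHom.mem_range.mp (by rwa [hRdef] at hx)
      rw [powMonoidHom_apply] at hc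
      obtain ⟨k, hk⟩ := hupows x
      have hdvd := sindep_pow hℓ hB n (fun i => (ℓ:ℤ) ^ d i * x i)
        (∏ i, ζ i ^ x i) c ⟨k, hk⟩ (by rw [← hsplit x]; exact hc.symm)
      have hδdvd : ∀ i, (ℓ:ℤ) ^ (n - d i) ∣ x i := by
        intro i
        rcases le_or_gt n (d i) with hnd | hnd
        · simpa [Nat.sub_eq_zero_of_le hnd] using one_dvd (x i)
        · have h2 : (ℓ:ℤ) ^ (d i) * (ℓ:ℤ) ^ (n - d i) ∣ (ℓ:ℤ) ^ (d i) * x i := by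
            rw [← pow_add, show d i + (n - d i) = n by omega]
            exact hdvd i
          exact (mul_dvd_mul_iff_left
            (pow_ne_zero _ (by exact_mod_cast hℓ.ne_zero : (ℓ:ℤ) ≠ 0))).mp h2
      refine ⟨hδdvd, ?_⟩
      have hBR : (∏ i, B i ^ ((ℓ:ℤ) ^ d i * x i)) ∈ R := hBpowR _ hdvd
      have hu : (∏ i, ζ i ^ x i)
          = (∏ i, B i ^ ((ℓ:ℤ) ^ d i * x i))⁻¹ * (∏ i, b i ^ x i) := by
        rw [hsplit x, inv_mul_cancel_left]
      rw [hu]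
      exact mul_mem (inv_mem hBR) hx
    · rintro ⟨h1, h2⟩
      rw [hsplit x]
      refine mul_mem (hBpowR _ fun i => ?_) h2
      rcases le_or_gt n (d i) with hnd | hnd
      · exact Dvd.dvd.mul_right (pow_dvd_pow (ℓ:ℤ) hnd) (x i)
      · obtain ⟨t, ht⟩ := h1 i
        refine ⟨t, ?_⟩
        rw [ht, ← mul_assoc, ← pow_add, show d i + (n - d i) = n by omega]
  have hmemC : ∀ x : Fin r → ℤ,
      ((∏ i, b i ^ x i) ∈ C ↔ ∀ i, (ℓ : ℤ) ^ (n - d i) ∣ x i) := by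
    intro x
    constructor
    · intro hx
      have hC2 : C = (phiHom (fun i => b i ^ ℓ ^ (n - d i))).range := by
        rw [hCdef', phiHom_range]
      rw [hC2] at hx
      obtain ⟨y, hy⟩ := MonoidHom.mem_range.mp hx
      rw [phiHom_pow] at hy
      have hx' : phiHom b (Multiplicative.ofAdd x) = ∏ i, b i ^ x i := by
        rw [phiHom_apply]
        rfl
      have hxy := hφinj (hy.trans hx'.symm)
      intro i
      have hcomp := congrFun (congrArg Multiplicative.toAdd hxy) i
      simp only [toAdd_ofAdd] at hcomp
      refine ⟨Multiplicative.toAdd y i, ?_⟩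
      rw [← hcomp]
      push_cast
      ring
    · intro hx
      have hrew : (∏ i, b i ^ x i) = phiHom (fun i => b i ^ ℓ ^ (n - d i))
          (Multiplicative.ofAdd fun i => x i / (ℓ:ℤ) ^ (n - d i)) := by
        rw [phiHom_pow, phiHom_apply]
        refine Finset.prod_congr rfl fun i _ => ?_
        congr 1
        simp only [toAdd_ofAdd]
        push_cast
        rw [Int.mul_ediv_cancel' (hx i)]
      rw [hrew, hCdef', ← phiHom_range]
      exact ⟨_, rfl⟩
  -- `Gₙ ≤ C`
  have hNC : N ≤ C.subgroupOf G := by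
    intro g hg
    rw [hNdef, Subgroup.mem_subgroupOf] at hg
    rw [Subgroup.mem_subgroupOf]
    obtain ⟨x, hx⟩ := hesurj g
    have hval : (g : Kˣ) = ∏ i, b i ^ (Multiplicative.toAdd x i) := by
      rw [← hx]; rfl
    rw [hval] at hg ⊢
    exact (hmemC _).mpr ((hmemR _).mp hg).1
  -- the homomorphism Ψ onto ⊕ ℤ/ℓ^δᵢ
  set Ψ : Multiplicative (Fin r → ℤ) →*
      ((i : Fin r) → Multiplicative (ZMod (ℓ ^ (n - d i)))) :=
    MonoidHom.mk' (fun x => fun i =>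
      Multiplicative.ofAdd ((Multiplicative.toAdd x i : ℤ) : ZMod (ℓ ^ (n - d i))))
      (by
        intro x y
        funext i
        simp [← ofAdd_add]) with hΨdef
  have hΨapp : ∀ (x : Multiplicative (Fin r → ℤ)) (i : Fin r),
      Ψ x i = Multiplicative.ofAdd
        ((Multiplicative.toAdd x i : ℤ) : ZMod (ℓ ^ (n - d i))) := fun x i => rfl
  have hΨs : Function.Surjective Ψ := by
    intro yv
    refine ⟨Multiplicative.ofAdd (fun i => ((Multiplicative.toAdd (yv i)).cast : ℤ)), ?_⟩
    funext i
    rw [hΨapp]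
    simp only [toAdd_ofAdd]
    rw [ZMod.intCast_zmod_cast]
    exact ofAdd_toAdd (yv i)
  have hkerΨ : ∀ x, (Ψ x = 1 ↔ ∀ i, (ℓ : ℤ) ^ (n - d i) ∣ Multiplicative.toAdd x i) := by
    intro x
    constructor
    · intro hx i
      have hxi := congrFun hx i
      rw [hΨapp] at hxi
      have h0 : ((Multiplicative.toAdd x i : ℤ) : ZMod (ℓ ^ (n - d i))) = 0 := by
        have := congrArg Multiplicative.toAdd hxi
        simpa using this
      have hd := (ZMod.intCast_zmod_eq_zero_iff_dvd _ _).mp h0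
      exact_mod_cast hd
    · intro hx
      funext i
      rw [hΨapp]
      have h0 : ((Multiplicative.toAdd x i : ℤ) : ZMod (ℓ ^ (n - d i))) = 0 :=
        (ZMod.intCast_zmod_eq_zero_iff_dvd _ _).mpr (by exact_mod_cast hx i)
      rw [h0]
      rfl
  have hmapΨ : Ψ.ker.map eE.toMonoidHom = C.subgroupOf G := by
    ext g
    rw [Subgroup.mem_map_equiv, Subgroup.mem_subgroupOf, MonoidHom.mem_ker]
    have hgx : (g : Kˣ) = ∏ i, b i ^ (Multiplicative.toAdd (eE.symm g) i) := by
      have happ : eH (eE.symm g) = g := eE.apply_symm_apply g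
      conv_lhs => rw [← happ]
      rfl
    rw [hgx, hmemC]
    exact (hkerΨ _)
  -- part (ii)
  have E1 := QuotientGroup.quotientQuotientEquivQuotient N (C.subgroupOf G) hNC
  have E2 := QuotientGroup.congr Ψ.ker (C.subgroupOf G) eE hmapΨ
  have E3 := QuotientGroup.quotientKerEquivOfSurjective Ψ hΨs
  -- the root-of-unity subgroup S
  set S := Subgroup.closure (Set.range fun i => ζ i ^ ℓ ^ (n - d i)) with hSdef
  set m : Fin r → ℕ := fun i => h i - min (h i) (n - d i) with hmdef
  have hordζ : ∀ i, orderOf (ζ i ^ ℓ ^ (n - d i)) = ℓ ^ m i := by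
    intro i
    rw [orderOf_pow' _ (pow_ne_zero _ hℓ.ne_zero), hζ i, gcd_pow_pow,
      Nat.pow_div (min_le_left _ _) hℓ.pos]
  have hST : S ≤ CommGroup.torsion Kˣ := by
    rw [hSdef]
    refine (Subgroup.closure_le _).mpr ?_
    rintro _ ⟨i, rfl⟩
    have hfo : IsOfFinOrder (ζ i) :=
      orderOf_pos_iff.mp (by rw [hζ i]; exact pow_pos hℓ.pos _)
    exact (CommGroup.mem_torsion _).mpr (hfo.pow)
  haveI hSfin : Finite ↥S :=
    Finite.of_injective _ (Subgroup.inclusion_injective hST)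
  haveI hScyc : IsCyclic ↥S := subgroup_units_cyclic _
  have hcardS : Nat.card ↥S = ℓ ^ Finset.univ.sup m :=
    card_closure_pow_orders hℓ hr _ m hordζ hSfin
  set Mn := Finset.univ.sup m with hMndef
  -- quotient map and the injection G/Gₙ → Kˣ/(Kˣ)^{ℓⁿ}
  set mkR := QuotientGroup.mk' R with hmkRdef
  have hρker : ∀ g : ↥G, (mkR.comp G.subtype) g = 1 ↔ (g : Kˣ) ∈ R := by
    intro g
    rw [MonoidHom.comp_apply]
    exact QuotientGroup.eq_one_iff _
  set f : (↥G ⧸ N) →* (Kˣ ⧸ R) := QuotientGroup.lift N (mkR.comp G.subtype)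
    (fun g hg => (hρker g).mpr (by rwa [hNdef, Subgroup.mem_subgroupOf] at hg))
    with hfdef
  have hfinj : Function.Injective f := by
    refine (injective_iff_map_eq_one f).mpr ?_
    intro q
    refine QuotientGroup.induction_on q ?_
    intro g hg
    change (mkR.comp G.subtype) g = 1 at hg
    have hgR : (g : Kˣ) ∈ R := (hρker g).mp hg
    refine (QuotientGroup.eq_one_iff g).mpr ?_
    rw [hNdef, Subgroup.mem_subgroupOf]
    exact hgR
  have hfm : Hn.map f = S.map mkR := by
    rw [hHndef, Subgroup.map_map]
    have hcomp : f.comp (QuotientGroup.mk' N) = mkR.comp G.subtype :=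
      MonoidHom.ext fun g => rfl
    rw [hcomp, ← Subgroup.map_map, Subgroup.subgroupOf_map_subtype,
      inf_eq_left.mpr hCle, hCdef', hSdef, MonoidHom.map_closure, MonoidHom.map_closure]
    congr 1
    rw [← Set.range_comp, ← Set.range_comp]
    refine congrArg Set.range (funext fun i => ?_)
    show mkR (b i ^ ℓ ^ (n - d i)) = mkR (ζ i ^ ℓ ^ (n - d i))
    refine (QuotientGroup.mk'_eq_mk' R).mpr ⟨(B i ^ ℓ ^ (d i + (n - d i)))⁻¹, ?_, ?_⟩
    · refine inv_mem (MonoidHom.mem_range.mpr ⟨B i ^ ℓ ^ (d i + (n - d i) - n), ?_⟩)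
      rw [powMonoidHom_apply, ← pow_mul, ← pow_add]
      congr 2
      omega
    · show (B i ^ ℓ ^ d i * ζ i) ^ ℓ ^ (n - d i) * _ = ζ i ^ ℓ ^ (n - d i)
      rw [mul_pow, ← pow_mul, ← pow_add,
        mul_comm ((B i) ^ ℓ ^ (d i + (n - d i))) (ζ i ^ ℓ ^ (n - d i)),
        mul_inv_cancel_right]
  set eqHn : ↥Hn ≃* ↥(S.map mkR) :=
    (Subgroup.equivMapOfInjective Hn f hfinj).trans (MulEquiv.subgroupCongr hfm)
    with heqHndef
  have hrangeρS : (mkR.comp S.subtype).range = S.map mkR := by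
    rw [MonoidHom.range_comp, Subgroup.range_subtype]
  refine ⟨?_, ?_, ⟨E1.trans (E2.symm.trans E3)⟩⟩
  · -- cyclicity
    have hc : IsCyclic ↥(S.map mkR) := by
      rw [← hrangeρS]
      exact isCyclic_of_surjective _ (mkR.comp S.subtype).rangeRestrict_surjective
    exact isCyclic_of_surjective eqHn.symm.toMonoidHom eqHn.symm.surjective
  · -- cardinality
    have hkerρS : (mkR.comp S.subtype).ker = R.subgroupOf S := by
      ext s
      rw [MonoidHom.mem_ker, MonoidHom.comp_apply, Subgroup.mem_subgroupOf]
      exact QuotientGroup.eq_one_iff _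
    have hexpS : ∀ u ∈ S, u ^ ℓ ^ Mn = 1 := by
      rw [hSdef]
      refine closure_pow_eq_one fun i => ?_
      refine orderOf_dvd_iff_pow_eq_one.mp ?_
      rw [hordζ i]
      exact pow_dvd_pow ℓ (Finset.le_sup (Finset.mem_univ i))
    have hSW : R.subgroupOf S = (powMonoidHom (ℓ ^ (z - n)) : ↥S →* ↥S).ker := by
      ext t
      rw [Subgroup.mem_subgroupOf, MonoidHom.mem_ker, powMonoidHom_apply]
      constructor
      · intro ht
        obtain ⟨c, hc⟩ := MonoidHom.mem_range.mp (by rwa [hRdef] at ht)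
        rw [powMonoidHom_apply] at hc
        have hexp : (t : Kˣ) ^ ℓ ^ Mn = 1 := hexpS _ t.2
        have h1 : c ^ ℓ ^ (n + Mn) = 1 := by
          rw [pow_add, pow_mul, hc]
          exact hexp
        have h2 : c ^ ℓ ^ z = 1 := by
          rw [hzdef]
          exact pow_torsion_le K hℓ h1
        have h3 : (t : Kˣ) ^ ℓ ^ (z - n) = 1 := by
          rw [← hc, ← pow_mul, ← pow_add,
            show n + (z - n) = z + (n + (z - n) - z) by omega, pow_add, pow_mul, h2,
            one_pow]
        exact Subtype.ext (by simpa using h3)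
      · intro ht
        have ht' : (t : Kˣ) ^ ℓ ^ (z - n) = 1 := by
          have hcoe := congrArg (Subtype.val) ht
          simpa using hcoe
        have ht'' : (t : Kˣ) ^ ℓ ^
            (padicValNat ℓ (Nat.card ↥(CommGroup.torsion Kˣ)) - n) = 1 := by
          rw [← hzdef]; exact ht'
        obtain ⟨c, hc⟩ := exists_pow_eq K hℓ n ht''
        rw [hRdef]
        exact MonoidHom.mem_range.mpr ⟨c, by rw [powMonoidHom_apply, hc]⟩
    have hcardker : Nat.card ↥(R.subgroupOf S) = ℓ ^ min Mn (z - n) := by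
      rw [hSW]
      exact card_pow_ker hℓ hcardS
    have hqcard : Nat.card ↥(S.map mkR) * ℓ ^ min Mn (z - n) = ℓ ^ Mn := by
      have h1 := Subgroup.card_eq_card_quotient_mul_card_subgroup (mkR.comp S.subtype).ker
      have h2 : Nat.card (↥S ⧸ (mkR.comp S.subtype).ker) = Nat.card ↥(S.map mkR) := by
        rw [← hrangeρS]
        exact Nat.card_congr (QuotientGroup.quotientKerEquivRange (mkR.comp S.subtype)).toEquiv
      have h3 : Nat.card ↥((mkR.comp S.subtype).ker) = ℓ ^ min Mn (z - n) := by
        rw [hkerρS]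
        exact hcardker
      rw [← h2, ← h3, ← h1, hcardS]
    have hfinalNat : Nat.card ↥Hn = ℓ ^ (Mn - min Mn (z - n)) := by
      have hc1 : Nat.card ↥Hn = Nat.card ↥(S.map mkR) := Nat.card_congr eqHn.toEquiv
      have hle := min_le_left Mn (z - n)
      have hpos : (0:ℕ) < ℓ ^ min Mn (z - n) := pow_pos hℓ.pos _
      rw [hc1]
      have hq2 : ℓ ^ (Mn - min Mn (z - n)) * ℓ ^ (min Mn (z - n)) = ℓ ^ Mn := by
        rw [← pow_add]
        congr 1
        omega
      exact Nat.eq_of_mul_eq_mul_right hpos (hqcard.trans hq2.symm)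
    rw [hfinalNat]
    have hE : (max (Finset.univ.sup' (Finset.univ_nonempty_iff.mpr ⟨⟨0, hr⟩⟩)
          fun i => (h i : ℤ) - max ((n : ℤ) - (d i : ℤ)) 0)
        (max ((z : ℤ) - (n:ℤ)) 0) + min ((n : ℤ) - (z:ℤ)) 0)
        = ((Mn - min Mn (z - n) : ℕ) : ℤ) := by
      obtain ⟨i0, _, hA⟩ := Finset.exists_mem_eq_sup'
        (Finset.univ_nonempty_iff.mpr ⟨⟨0, hr⟩⟩)
        (fun i => (h i : ℤ) - max ((n : ℤ) - (d i : ℤ)) 0)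
      obtain ⟨i1, _, hM1⟩ := Finset.exists_mem_eq_sup Finset.univ
        ⟨⟨0, hr⟩, Finset.mem_univ _⟩ m
      have hAle : (h i1 : ℤ) - max ((n : ℤ) - (d i1 : ℤ)) 0
          ≤ (h i0 : ℤ) - max ((n : ℤ) - (d i0 : ℤ)) 0 := by
        rw [← hA]
        exact Finset.le_sup' (f := fun i => (h i : ℤ) - max ((n : ℤ) - (d i : ℤ)) 0)
          (Finset.mem_univ i1)
      have hMle : h i0 - min (h i0) (n - d i0) ≤ h i1 - min (h i1) (n - d i1) := by
        have hl := Finset.le_sup (f := m) (Finset.mem_univ i0)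
        rw [hM1] at hl
        exact hl
      rw [hA, hMndef, hM1, hmdef]
      simp only []
      omega
    rw [hE, zpow_natCast]
    push_cast
    ring
end

section
/- Let K be a number field not containing a primitive 4th root of unity, and let G be a finitely generated subgroup of K^×. Then [K(square roots of G) : K] = e · [K(ζ_4)(square roots of G) : K(ζ_4)], where e = 2 if G contains an element of the form -x² with x ∈ K^×, and e = 1 otherwise. -/
open NumberField IsDedekindDomain IntermediateField
open scoped Classical

set_option synthInstance.maxHeartbeats 1000000
set_option maxHeartbeats 1000000

section Aux
open Polynomial

variable {K Ω : Type} [Field K] [Field Ω] [Algebra K Ω] [CharZero Ω]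

omit [CharZero Ω] in
theorem sq_cases' {x y : Ω} (h : x ^ 2 = y ^ 2) : x = y ∨ x = -y := by
  have h0 : (x - y) * (x + y) = 0 := by
    have : (x - y) * (x + y) = x ^ 2 - y ^ 2 := by ring
    rw [this, h, sub_self]
  rcases mul_eq_zero.mp h0 with h1 | h1
  · left; linear_combination h1
  · right; linear_combination h1

theorem lemA' (F : IntermediateField K Ω) (s t : Ω) (hs : s ^ 2 ∈ F) (ht2 : t ^ 2 ∈ F)
    (h : t ∈ IntermediateField.adjoin F {s}) : t ∈ F ∨ t * s ∈ F := by
  by_cases hsF : s ∈ F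
  · left
    have hb : IntermediateField.adjoin F {s} ≤ ⊥ := by
      rw [IntermediateField.adjoin_le_iff]
      intro x hx
      rw [Set.mem_singleton_iff] at hx
      subst hx
      exact IntermediateField.mem_bot.mpr ⟨⟨x, hsF⟩, rfl⟩
    obtain ⟨u, hu⟩ := IntermediateField.mem_bot.mp (hb h)
    rw [← hu]; exact u.2
  · have hint : IsIntegral F s := by
      refine ⟨X ^ 2 - C ⟨s ^ 2, hs⟩, monic_X_pow_sub_C _ two_ne_zero, ?_⟩
      simp [sub_eq_zero]
    have hadj : t ∈ Algebra.adjoin F {s} := by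
      have := IntermediateField.adjoin_simple_toSubalgebra_of_isAlgebraic hint.isAlgebraic
      rw [← this]; exact h
    rw [Algebra.adjoin_singleton_eq_range_aeval] at hadj
    obtain ⟨p, hp0⟩ := hadj
    have hp : Polynomial.aeval s p = t := hp0
    set f : Polynomial F := X ^ 2 - C ⟨s ^ 2, hs⟩ with hf
    have hmon : f.Monic := monic_X_pow_sub_C _ two_ne_zero
    have hfdeg : f.natDegree = 2 := natDegree_X_pow_sub_C
    set q := p %ₘ f with hq
    have haq : Polynomial.aeval s q = t := by
      have hdiv := Polynomial.modByMonic_add_div p f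
      have h2 : Polynomial.aeval s f = 0 := by simp [hf, sub_eq_zero]
      calc Polynomial.aeval s q = Polynomial.aeval s (q + f * (p /ₘ f)) := by
            rw [map_add, map_mul, h2, zero_mul, add_zero]
        _ = Polynomial.aeval s p := by rw [hq, hdiv]
        _ = t := hp
    have hdeg : q.natDegree < 2 := by
      have := Polynomial.natDegree_modByMonic_lt p hmon (fun h1 => by
        have := congrArg Polynomial.natDegree h1
        rw [hfdeg, natDegree_one] at this; omega)
      rwa [hfdeg] at this
    have hexp : t = algebraMap F Ω (q.coeff 0) + algebraMap F Ω (q.coeff 1) * s := by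
      rw [← haq, Polynomial.aeval_eq_sum_range' hdeg]
      rw [Finset.sum_range_succ, Finset.sum_range_succ, Finset.sum_range_zero]
      simp [Algebra.smul_def]
    set u : Ω := algebraMap F Ω (q.coeff 0) with hu
    set v : Ω := algebraMap F Ω (q.coeff 1) with hv
    have huF : u ∈ F := (q.coeff 0).2
    have hvF : v ∈ F := (q.coeff 1).2
    by_cases hv0 : v = 0
    · left; rw [hexp, hv0, zero_mul, add_zero]; exact huF
    by_cases hu0 : u = 0
    · right
      have : t * s = v * s ^ 2 := by rw [hexp, hu0]; ring
      rw [this]; exact mul_mem hvF hs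
    · exfalso
      apply hsF
      have key : (2 * u * v) * s = t ^ 2 - u ^ 2 - v ^ 2 * s ^ 2 := by rw [hexp]; ring
      have hmem : (2 * u * v) * s ∈ F := by
        rw [key]
        exact sub_mem (sub_mem ht2 (pow_mem huF 2)) (mul_mem (pow_mem hvF 2) hs)
      have hne : (2 * u * v) ≠ 0 := by
        simp only [mul_ne_zero_iff]
        exact ⟨⟨two_ne_zero, hu0⟩, hv0⟩
      have h2uv : (2 * u * v) ∈ F :=
        mul_mem (mul_mem (by exact_mod_cast IntermediateField.intCast_mem F 2) huF) hvF
      have : s = (2 * u * v)⁻¹ * ((2 * u * v) * s) := by field_simp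
      rw [this]
      exact mul_mem (inv_mem h2uv) hmem

theorem lemB' (H : Subgroup Kˣ) (T : Finset Ω)
    (hT : ∀ y ∈ T, ∃ g ∈ H, y ^ 2 = algebraMap K Ω (g : Kˣ).val)
    (t : Ω) (c : Kˣ) (ht : t ^ 2 = algebraMap K Ω (c : K))
    (hmem : t ∈ IntermediateField.adjoin K (T : Set Ω)) :
    ∃ g ∈ H, ∃ x : Kˣ, c = g * x ^ 2 := by
  classical
  induction T using Finset.induction_on generalizing t c with
  | empty =>
    rw [Finset.coe_empty, IntermediateField.adjoin_empty] at hmem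
    obtain ⟨b, hb⟩ := IntermediateField.mem_bot.mp hmem
    have hb2 : algebraMap K Ω ((b : K) ^ 2) = algebraMap K Ω (c : K) := by
      rw [map_pow, hb, ht]
    have hbc : (b : K) ^ 2 = (c : K) := (algebraMap K Ω).injective hb2
    have hb0 : (b : K) ≠ 0 := by
      intro h0
      rw [h0] at hbc
      exact c.ne_zero (by simpa using hbc.symm)
    refine ⟨1, H.one_mem, Units.mk0 (b : K) hb0, ?_⟩
    ext
    simpa using hbc.symm
  | @insert a T ha ih =>
    obtain ⟨g₀, hg₀H, hg₀⟩ := hT a (Finset.mem_insert_self a T)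
    set F := IntermediateField.adjoin K (T : Set Ω) with hF
    have hcoe : ((insert a T : Finset Ω) : Set Ω) = (T : Set Ω) ∪ {a} := by
      rw [Finset.coe_insert, Set.insert_eq, Set.union_comm]
    have hadj : IntermediateField.adjoin K ((insert a T : Finset Ω) : Set Ω)
        = (IntermediateField.adjoin F {a}).restrictScalars K := by
      rw [hcoe, IntermediateField.adjoin_adjoin_left]
    rw [hadj] at hmem
    have hmem' : t ∈ IntermediateField.adjoin F {a} := hmem
    have hsF : a ^ 2 ∈ F := by
      rw [hg₀]; exact F.algebraMap_mem _
    have htF : t ^ 2 ∈ F := by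
      rw [ht]; exact F.algebraMap_mem _
    rcases lemA' F a t hsF htF hmem' with h1 | h1
    · exact ih (fun y hy => hT y (Finset.mem_insert_of_mem hy)) t c ht h1
    · have h2 : (t * a) ^ 2 = algebraMap K Ω ((c * g₀ : Kˣ) : K) := by
        rw [Units.val_mul, map_mul, ← ht, ← hg₀]; ring
      obtain ⟨g, hgH, x, hx⟩ :=
        ih (fun y hy => hT y (Finset.mem_insert_of_mem hy)) (t * a) (c * g₀) h2 h1
      refine ⟨g * g₀⁻¹, H.mul_mem hgH (H.inv_mem hg₀H), x, ?_⟩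
      have : c = g * x ^ 2 * g₀⁻¹ := by rw [← hx, mul_inv_cancel_right]
      rw [this, mul_right_comm]

theorem lemRank' {F : Type} [Field F] {E : Type} [Field E] [Algebra F E]
    (i : E) (hi : i ^ 2 = -1) (hF : ∀ a : F, a ^ 2 ≠ -1) :
    Module.finrank F (IntermediateField.adjoin F {i}) = 2 := by
  have hev : Polynomial.aeval i (X ^ 2 - C (-1 : F)) = 0 := by
    simp [hi]
  have hint : IsIntegral F i := ⟨X ^ 2 - C (-1 : F), monic_X_pow_sub_C _ two_ne_zero, hev⟩
  have hirr : Irreducible (X ^ 2 - C (-1 : F)) :=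
    X_pow_sub_C_irreducible_of_prime Nat.prime_two hF
  have hmp : minpoly F i = X ^ 2 - C (-1 : F) :=
    (minpoly.eq_of_irreducible_of_monic hirr hev (monic_X_pow_sub_C _ two_ne_zero)).symm
  rw [IntermediateField.adjoin.finrank hint, hmp, natDegree_X_pow_sub_C]

end Aux

/-- if `ζ_4 ∉ K`, then `[K(√G):K] = e·[K(ζ_4)(√G):K(ζ_4)]` (stated after
multiplying both sides by `[K(ζ_4):K]`), where `e = 2` if `G` contains minus a square in
`Kˣ` and `e = 1` otherwise. -/
theorem stmt16 (K : Type) [Field K] [NumberField K]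
    (hK : ¬ ∃ ζ : K, IsPrimitiveRoot ζ 4)
    (G : Subgroup Kˣ) (hfg : G.FG) :
    Module.finrank K
        ↥(IntermediateField.adjoin K
          {x : Kbar K | ∃ g ∈ G, x ^ 2 = algebraMap K (Kbar K) (g : K)}) *
      Module.finrank K ↥(cyclo K 4) =
    (if ∃ x : Kˣ, -(x ^ 2) ∈ G then 2 else 1) *
      Module.finrank K ↥(cycloKummer K G 4 2) := by
  haveI : CharZero (Kbar K) := charZero_of_injective_algebraMap (algebraMap K (Kbar K)).injective
  set Ω := Kbar K with hΩ
  set S : Set Ω := {x : Ω | ∃ g ∈ G, x ^ 2 = algebraMap K Ω (g : K)} with hS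
  set L : IntermediateField K Ω := IntermediateField.adjoin K S with hL
  -- a square root of -1
  obtain ⟨i, hi⟩ : ∃ i : Ω, i ^ 2 = -1 := IsAlgClosed.exists_pow_nat_eq (-1 : Ω) two_pos
  -- K contains no square root of -1
  have hKsq : ∀ a : K, a ^ 2 ≠ -1 := by
    intro a ha
    apply hK
    refine ⟨a, ?_, ?_⟩
    · rw [show (4 : ℕ) = 2 * 2 by norm_num, pow_mul, ha]; ring
    · intro l hl
      have h4 : a ^ 4 = 1 := by
        rw [show (4 : ℕ) = 2 * 2 by norm_num, pow_mul, ha]; ring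
      have hmod : a ^ (l % 4) = 1 := by
        conv at hl => rw [← Nat.div_add_mod l 4]
        rw [pow_add, pow_mul, h4, one_pow, one_mul] at hl
        exact hl
      have hne : (1 : K) ≠ -1 := by norm_num
      have ha1 : a ≠ 1 := by rintro rfl; rw [one_pow] at ha; exact hne ha
      set r := l % 4 with hr
      have hlt : r < 4 := Nat.mod_lt _ (by norm_num)
      interval_cases r
      · exact Nat.dvd_of_mod_eq_zero hr.symm
      · rw [pow_one] at hmod; exact absurd hmod ha1
      · rw [hmod] at ha; exact absurd ha.symm (by norm_num)
      · exfalso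
        apply ha1
        have h31 : a ^ 3 * a = 1 := by
          rw [show (4 : ℕ) = 3 + 1 by norm_num, pow_succ] at h4; exact h4
        rw [hmod, one_mul] at h31
        exact h31
  -- cyclo K 4 = K(i)
  have hi4 : i ^ 4 = 1 := by
    rw [show (4 : ℕ) = 2 * 2 by norm_num, pow_mul, hi]; ring
  have hcyc : cyclo K 4 = IntermediateField.adjoin K {i} := by
    apply le_antisymm
    · rw [cyclo, IntermediateField.adjoin_le_iff]
      intro x hx
      have hx4 : x ^ 4 = 1 := hx
      have h0 : (x ^ 2 - 1) * (x ^ 2 + 1) = 0 := by linear_combination hx4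
      rcases mul_eq_zero.mp h0 with h1 | h1
      · have hx2 : x ^ 2 = 1 ^ 2 := by rw [one_pow]; linear_combination h1
        rcases sq_cases' hx2 with h2 | h2 <;> rw [h2]
        · exact one_mem _
        · exact neg_mem (one_mem _)
      · have hx2 : x ^ 2 = i ^ 2 := by rw [hi]; linear_combination h1
        rcases sq_cases' hx2 with h2 | h2 <;> rw [h2]
        · exact IntermediateField.subset_adjoin K {i} rfl
        · exact neg_mem (IntermediateField.subset_adjoin K {i} rfl)
    · rw [IntermediateField.adjoin_le_iff, Set.singleton_subset_iff]
      exact IntermediateField.subset_adjoin K _ hi4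
  have hrankcyc : Module.finrank K (cyclo K 4) = 2 := by
    rw [hcyc]; exact lemRank' i hi hKsq
  have hck : cycloKummer K G 4 2 = cyclo K 4 ⊔ L := by
    rw [cycloKummer, cyclo, hL, hS, IntermediateField.adjoin_union]
  by_cases h : ∃ x : Kˣ, -(x ^ 2) ∈ G
  · rw [if_pos h]
    obtain ⟨x, hx⟩ := h
    obtain ⟨y, hy⟩ : ∃ y : Ω, y ^ 2 = algebraMap K Ω ((-(x ^ 2) : Kˣ) : K) :=
      IsAlgClosed.exists_pow_nat_eq _ two_pos
    have hyS : y ∈ S := ⟨-(x ^ 2), hx, hy⟩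
    set z : Ω := y * (algebraMap K Ω (x : K))⁻¹ with hzdef
    have hx0 : algebraMap K Ω (x : K) ≠ 0 := by
      simpa using (map_ne_zero (algebraMap K Ω)).mpr x.ne_zero
    have hz : z ^ 2 = -1 := by
      have hval : ((-(x ^ 2) : Kˣ) : K) = -((x : K) ^ 2) := by push_cast; ring
      rw [hzdef, mul_pow, hy, hval, map_neg, map_pow]
      rw [neg_mul, ← mul_pow, mul_inv_cancel₀ hx0, one_pow]
    have hzL : z ∈ L := by
      refine mul_mem (IntermediateField.subset_adjoin K S hyS) (inv_mem ?_)
      exact L.algebraMap_mem _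
    have hiL : i ∈ L := by
      have : i ^ 2 = z ^ 2 := by rw [hi, hz]
      rcases sq_cases' this with h2 | h2 <;> rw [h2]
      · exact hzL
      · exact neg_mem hzL
    have hLK : cycloKummer K G 4 2 = L := by
      rw [hck, hcyc]
      refine sup_eq_right.mpr ?_
      rw [IntermediateField.adjoin_le_iff, Set.singleton_subset_iff]
      exact hiL
    rw [hLK, hrankcyc]
    ring
  · rw [if_neg h]
    -- i ∉ L
    have hiL : i ∉ L := by
      intro hiL
      obtain ⟨T, hTS, hT⟩ := IntermediateField.exists_finset_of_mem_adjoin hiL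
      have hneg1 : i ^ 2 = algebraMap K Ω (((-1 : Kˣ) : K)) := by
        rw [hi]; simp
      obtain ⟨g, hgG, x, hx⟩ :=
        lemB' G T (fun y hy => hTS hy) i (-1) hneg1 hT
      apply h
      refine ⟨x⁻¹, ?_⟩
      have hg : g = -(x⁻¹ ^ 2) := by
        have h1 : g = (-1) * (x ^ 2)⁻¹ := by
          rw [hx, mul_assoc, mul_inv_cancel, mul_one]
        rw [h1, inv_pow, ← neg_eq_neg_one_mul]
      rw [← hg]
      exact hgG
    have hnotL2 : ∀ a : ↥L, a ^ 2 ≠ (-1 : ↥L) := by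
      intro a ha
      apply hiL
      have haΩ : ((a : Ω)) ^ 2 = i ^ 2 := by
        rw [hi]
        have := congrArg (fun w : ↥L => (w : Ω)) ha
        push_cast at this
        exact this
      rcases sq_cases' haΩ.symm with h2 | h2
      · rw [h2]; exact a.2
      · rw [h2]; exact neg_mem a.2
    have hrankLi : Module.finrank ↥L ↥(IntermediateField.adjoin ↥L {i}) = 2 := by
      refine lemRank' i hi hnotL2
    have hck2 : cycloKummer K G 4 2 = (IntermediateField.adjoin ↥L {i}).restrictScalars K := by
      rw [hck, hcyc, hL, sup_comm, ← IntermediateField.adjoin_union,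
        IntermediateField.adjoin_adjoin_left]
    rw [hck2, hrankcyc, one_mul]
    have hbridge : Module.finrank K ↥((IntermediateField.adjoin ↥L {i}).restrictScalars K)
        = Module.finrank K ↥(IntermediateField.adjoin ↥L {i}) := rfl
    rw [hbridge, ← Module.finrank_mul_finrank K ↥L ↥(IntermediateField.adjoin ↥L {i}), hrankLi]
end

section
/- Let K be a number field, ℓ a prime number, and G a finitely generated subgroup of K^×. For every integer n ≥ 1, the set of primes 𝔭 of K (excluding the finitely many primes where the reduction of G is not well-defined or contains 0) such that the ℓ-adic valuation of the size of the reduction of G modulo 𝔭 equals n has a natural density, equal to D_{K,ℓ}(G^{ℓ^n}) - D_{K,ℓ}(G^{ℓ^{n-1}}), where for a finitely generated subgroup H ⊂ K^×, D_{K,ℓ}(H) denotes the natural density of the set of primes 𝔭 such that the reduction of H modulo 𝔭 has size coprime to ℓ. -/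
open NumberField IsDedekindDomain IntermediateField

set_option synthInstance.maxHeartbeats 1000000
set_option maxHeartbeats 1000000

noncomputable section AuxProofs

open scoped Multiplicative

variable {K : Type} [Field K] [NumberField K]

theorem aux_notMem_iff_intVal (v : HeightOneSpectrum (𝓞 K)) (r : 𝓞 K) :
    r ∉ v.asIdeal ↔ v.intValuation r = 1 := by
  rw [← not_iff_not, not_not]
  constructor
  · intro hr
    exact ((v.intValuation_lt_one_iff_dvd r).mpr (Ideal.dvd_span_singleton.mpr hr)).ne
  · intro hne
    exact Ideal.dvd_span_singleton.mp ((v.intValuation_lt_one_iff_dvd r).mp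
      (lt_of_le_of_ne (v.intValuation_le_one r) hne))

theorem aux_crux (v : HeightOneSpectrum (𝓞 K)) (g : K) (hg : v.valuation K g = 1) :
    ∃ a b : 𝓞 K, a ∉ v.asIdeal ∧ b ∉ v.asIdeal ∧
      g * algebraMap (𝓞 K) K b = algebraMap (𝓞 K) K a := by
  obtain ⟨⟨x, y⟩, rfl⟩ := IsLocalization.mk'_surjective (nonZeroDivisors (𝓞 K)) g
  rw [IsDedekindDomain.HeightOneSpectrum.valuation_of_mk'] at hg
  have hyval : v.intValuation (y : 𝓞 K) ≠ 0 := v.intValuation_ne_zero' y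
  have hval : v.intValuation x = v.intValuation (y : 𝓞 K) :=
    (div_eq_one_iff_eq hyval).mp hg
  have hxval : v.intValuation x ≠ 0 := hval ▸ hyval
  have hx0 : x ≠ 0 := by
    intro h; apply hxval; rw [h]; exact v.intValuation.map_zero
  have hy0 : (y : 𝓞 K) ≠ 0 := nonZeroDivisors.ne_zero y.2
  have hinj : Function.Injective (algebraMap (𝓞 K) K) := IsFractionRing.injective (𝓞 K) K
  obtain ⟨I₀, hI₀⟩ : (Ideal.span {x} ⊔ Ideal.span {(y : 𝓞 K)}) ∣ Ideal.span {x} :=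
    Ideal.dvd_iff_le.mpr le_sup_left
  obtain ⟨J₀, hJ₀⟩ : (Ideal.span {x} ⊔ Ideal.span {(y : 𝓞 K)}) ∣ Ideal.span {(y : 𝓞 K)} :=
    Ideal.dvd_iff_le.mpr le_sup_right
  have hD0 : Ideal.span {x} ⊔ Ideal.span {(y : 𝓞 K)} ≠ 0 := by
    intro h
    have hIbot : Ideal.span {x} ≤ (⊥ : Ideal (𝓞 K)) := by
      rw [← Ideal.zero_eq_bot, ← h]; exact le_sup_left
    exact hx0 (Ideal.span_singleton_eq_bot.mp (le_bot_iff.mp hIbot))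
  have hsup : I₀ ⊔ J₀ = ⊤ := by
    refine mul_left_cancel₀ hD0 ?_
    rw [Ideal.mul_sup, ← hI₀, ← hJ₀, Ideal.mul_top]
  have hnotboth : ¬ (I₀ ≤ v.asIdeal ∧ J₀ ≤ v.asIdeal) := by
    rintro ⟨h1, h2⟩
    exact v.isPrime.ne_top (top_le_iff.mp (hsup ▸ sup_le h1 h2))
  have hmkdiv : IsLocalization.mk' K x y
      = algebraMap (𝓞 K) K x / algebraMap (𝓞 K) K (y : 𝓞 K) :=
    IsFractionRing.mk'_eq_div y
  have hyK : algebraMap (𝓞 K) K (y : 𝓞 K) ≠ 0 := (map_ne_zero_iff _ hinj).mpr hy0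
  by_cases hJv : J₀ ≤ v.asIdeal
  case pos =>
    have hIv : ¬ I₀ ≤ v.asIdeal := fun h => hnotboth ⟨h, hJv⟩
    obtain ⟨c, hcI, hcv⟩ := SetLike.not_le_iff_exists.mp hIv
    have hmem : (y : 𝓞 K) * c ∈ Ideal.span {x} := by
      have h1 : Ideal.span {(y : 𝓞 K) * c} ≤ Ideal.span {x} := by
        calc Ideal.span {(y : 𝓞 K) * c} = Ideal.span {(y : 𝓞 K)} * Ideal.span {c} :=
              (Ideal.span_singleton_mul_span_singleton _ _).symm
          _ = (Ideal.span {x} ⊔ Ideal.span {(y : 𝓞 K)}) * J₀ * Ideal.span {c} := by rw [← hJ₀]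
          _ = (Ideal.span {x} ⊔ Ideal.span {(y : 𝓞 K)}) * (J₀ * Ideal.span {c}) := mul_assoc _ _ _
          _ ≤ (Ideal.span {x} ⊔ Ideal.span {(y : 𝓞 K)}) * I₀ :=
              Ideal.mul_mono_right (le_trans Ideal.mul_le_right
                ((Ideal.span_singleton_le_iff_mem _).mpr hcI))
          _ = Ideal.span {x} := hI₀.symm
      exact h1 (Ideal.mem_span_singleton_self _)
    rw [Ideal.mem_span_singleton] at hmem
    obtain ⟨a, ha⟩ := hmem
    refine ⟨c, a, hcv, ?_, ?_⟩
    · have h2 := congrArg v.intValuation ha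
      rw [map_mul, map_mul, hval] at h2
      have h3 : v.intValuation c = v.intValuation a := mul_left_cancel₀ hyval h2
      rw [aux_notMem_iff_intVal] at hcv ⊢
      rw [← h3, hcv]
    · have h4 := congrArg (algebraMap (𝓞 K) K) ha
      rw [map_mul, map_mul] at h4
      dsimp only
      rw [hmkdiv, div_mul_eq_mul_div, div_eq_iff hyK]
      linear_combination -h4
  case neg =>
    obtain ⟨c, hcJ, hcv⟩ := SetLike.not_le_iff_exists.mp hJv
    have hmem : x * c ∈ Ideal.span {(y : 𝓞 K)} := by
      have h1 : Ideal.span {x * c} ≤ Ideal.span {(y : 𝓞 K)} := by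
        calc Ideal.span {x * c} = Ideal.span {x} * Ideal.span {c} :=
              (Ideal.span_singleton_mul_span_singleton _ _).symm
          _ = (Ideal.span {x} ⊔ Ideal.span {(y : 𝓞 K)}) * I₀ * Ideal.span {c} := by rw [← hI₀]
          _ = (Ideal.span {x} ⊔ Ideal.span {(y : 𝓞 K)}) * (I₀ * Ideal.span {c}) := mul_assoc _ _ _
          _ ≤ (Ideal.span {x} ⊔ Ideal.span {(y : 𝓞 K)}) * J₀ :=
              Ideal.mul_mono_right (le_trans Ideal.mul_le_right
                ((Ideal.span_singleton_le_iff_mem _).mpr hcJ))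
          _ = Ideal.span {(y : 𝓞 K)} := hJ₀.symm
      exact h1 (Ideal.mem_span_singleton_self _)
    rw [Ideal.mem_span_singleton] at hmem
    obtain ⟨a, ha⟩ := hmem
    refine ⟨a, c, ?_, hcv, ?_⟩
    · have h2 := congrArg v.intValuation ha
      rw [map_mul, map_mul, hval] at h2
      have h3 : v.intValuation c = v.intValuation a := mul_left_cancel₀ hyval h2
      rw [aux_notMem_iff_intVal] at hcv ⊢
      rw [← h3, hcv]
    · have h4 := congrArg (algebraMap (𝓞 K) K) ha
      rw [map_mul, map_mul] at h4
      dsimp only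
      rw [hmkdiv, div_mul_eq_mul_div, div_eq_iff hyK]
      linear_combination h4

theorem aux_val_one_iff (v : HeightOneSpectrum (𝓞 K)) (g : K) :
    (∃ a b : 𝓞 K, a ∉ v.asIdeal ∧ b ∉ v.asIdeal ∧
      g * algebraMap (𝓞 K) K b = algebraMap (𝓞 K) K a) ↔ v.valuation K g = 1 := by
  constructor
  · rintro ⟨a, b, ha, hb, hab⟩
    rw [aux_notMem_iff_intVal] at ha hb
    have h := congrArg (v.valuation K) hab
    rw [map_mul, IsDedekindDomain.HeightOneSpectrum.valuation_of_algebraMap,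
      IsDedekindDomain.HeightOneSpectrum.valuation_of_algebraMap, ha, hb, mul_one] at h
    exact h
  · exact aux_crux v g

theorem aux_pow_eq_one_zm0 (x : WithZero (Multiplicative ℤ)) (m : ℕ) (hm : m ≠ 0) (hx : x ≠ 0) (h : x ^ m = 1) :
    x = 1 := by
  obtain ⟨a, rfl⟩ := WithZero.ne_zero_iff_exists.mp hx
  rw [← WithZero.coe_pow, ← WithZero.coe_one, WithZero.coe_inj] at h
  rw [← WithZero.coe_one, WithZero.coe_inj]
  have h2 := congrArg Multiplicative.toAdd h
  rw [toAdd_pow, toAdd_one] at h2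
  have h3 : Multiplicative.toAdd a = 0 := by simpa [hm] using smul_eq_zero.mp h2
  simpa using congrArg Multiplicative.ofAdd h3

theorem aux_good_iff_val (G : Subgroup Kˣ) (v : HeightOneSpectrum (𝓞 K)) :
    GoodPrime K G v ↔ ∀ g ∈ G, v.valuation K (g : K) = 1 := by
  constructor
  · intro h g hg; exact (aux_val_one_iff v _).mp (h g hg)
  · intro h g hg; exact (aux_val_one_iff v _).mpr (h g hg)

theorem aux_good_map_iff (G : Subgroup Kˣ) (v : HeightOneSpectrum (𝓞 K)) (m : ℕ) (hm : m ≠ 0) :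
    GoodPrime K (G.map (powMonoidHom m : Kˣ →* Kˣ)) v ↔ GoodPrime K G v := by
  rw [aux_good_iff_val, aux_good_iff_val]
  constructor
  · intro h g hg
    have hpow := h (g ^ m) ⟨g, hg, rfl⟩
    rw [Units.val_pow_eq_pow_val, map_pow] at hpow
    refine aux_pow_eq_one_zm0 _ m hm ?_ hpow
    exact (Valuation.ne_zero_iff _).mpr (Units.ne_zero g)
  · rintro h g ⟨g', hg', rfl⟩
    show v.valuation K ((g' ^ m : Kˣ) : K) = 1
    rw [Units.val_pow_eq_pow_val, map_pow, h g' hg', one_pow]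

instance auxResField (v : HeightOneSpectrum (𝓞 K)) : Field ((𝓞 K) ⧸ v.asIdeal) :=
  Ideal.Quotient.field v.asIdeal

instance auxResFinite (v : HeightOneSpectrum (𝓞 K)) : Finite ((𝓞 K) ⧸ v.asIdeal) := by
  rw [← Ideal.absNorm_ne_zero_iff]
  exact Ideal.absNorm_ne_zero_of_nonZeroDivisors
    ⟨v.asIdeal, mem_nonZeroDivisors_of_ne_zero v.ne_bot⟩

theorem aux_num_notMem {G : Subgroup Kˣ} {v : HeightOneSpectrum (𝓞 K)} (hv : GoodPrime K G v)
    {g : Kˣ} (hg : g ∈ G) {a b : 𝓞 K} (hb : b ∉ v.asIdeal)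
    (hab : (g : K) * algebraMap (𝓞 K) K b = algebraMap (𝓞 K) K a) : a ∉ v.asIdeal := by
  have hval : v.valuation K (g : K) = 1 := (aux_good_iff_val G v).mp hv g hg
  have h := congrArg (v.valuation K) hab
  rw [map_mul, hval, one_mul, IsDedekindDomain.HeightOneSpectrum.valuation_of_algebraMap,
    IsDedekindDomain.HeightOneSpectrum.valuation_of_algebraMap] at h
  rw [aux_notMem_iff_intVal] at hb ⊢
  rw [← h, hb]

theorem aux_mk_ne_zero {v : HeightOneSpectrum (𝓞 K)} {r : 𝓞 K} (h : r ∉ v.asIdeal) :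
    Ideal.Quotient.mk v.asIdeal r ≠ 0 := fun h0 => h (Ideal.Quotient.eq_zero_iff_mem.mp h0)

/-- the reduction subgroup -/
def auxRedSubgroup (G : Subgroup Kˣ) (v : HeightOneSpectrum (𝓞 K)) (hv : GoodPrime K G v) :
    Subgroup ((𝓞 K) ⧸ v.asIdeal)ˣ where
  carrier := {x | (x : (𝓞 K) ⧸ v.asIdeal) ∈ reductionSet K G v}
  one_mem' := by
    refine ⟨1, one_mem G, 1, 1, ?_, by simp, by simp⟩
    intro h1
    exact v.isPrime.ne_top (v.asIdeal.eq_top_iff_one.mpr h1)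
  mul_mem' := by
    rintro x y ⟨g1, hg1, a1, b1, hb1, hab1, hx⟩ ⟨g2, hg2, a2, b2, hb2, hab2, hy⟩
    refine ⟨g1 * g2, mul_mem hg1 hg2, a1 * a2, b1 * b2, ?_, ?_, ?_⟩
    · intro hmem
      rcases v.isPrime.mem_or_mem hmem with h | h
      exacts [hb1 h, hb2 h]
    · push_cast
      linear_combination (algebraMap (𝓞 K) K b2) * (g2 : K) * hab1
        + (algebraMap (𝓞 K) K a1) * hab2
    · rw [Units.val_mul, map_mul, map_mul]
      linear_combination ((y : (𝓞 K) ⧸ v.asIdeal) * Ideal.Quotient.mk v.asIdeal b2) * hx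
        + (Ideal.Quotient.mk v.asIdeal a1) * hy
  inv_mem' := by
    rintro x ⟨g, hg, a, b, hb, hab, hx⟩
    have ha : a ∉ v.asIdeal := aux_num_notMem hv hg hb hab
    refine ⟨g⁻¹, inv_mem hg, b, a, ha, ?_, ?_⟩
    · rw [Units.val_inv_eq_inv_val]
      field_simp
      linear_combination -hab
    · have hane : Ideal.Quotient.mk v.asIdeal a ≠ 0 := aux_mk_ne_zero ha
      have hxne : (x : (𝓞 K) ⧸ v.asIdeal) ≠ 0 := Units.ne_zero x
      rw [Units.val_inv_eq_inv_val]
      field_simp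
      linear_combination -hx

theorem aux_red_eq_coe (G : Subgroup Kˣ) (v : HeightOneSpectrum (𝓞 K)) (hv : GoodPrime K G v) :
    reductionSet K G v
      = (fun x : ((𝓞 K) ⧸ v.asIdeal)ˣ => (x : (𝓞 K) ⧸ v.asIdeal)) ''
          ↑(auxRedSubgroup G v hv) := by
  ext y
  constructor
  · rintro ⟨g, hg, a, b, hb, hab, hy⟩
    have ha : a ∉ v.asIdeal := aux_num_notMem hv hg hb hab
    have hy0 : y ≠ 0 := by
      intro h0
      rw [h0, zero_mul] at hy
      exact aux_mk_ne_zero ha hy.symm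
    exact ⟨Units.mk0 y hy0, ⟨g, hg, a, b, hb, hab, hy⟩, rfl⟩
  · rintro ⟨x, hx, rfl⟩
    exact hx

theorem aux_red_pow_eq (G : Subgroup Kˣ) (v : HeightOneSpectrum (𝓞 K)) (hv : GoodPrime K G v)
    (m : ℕ) :
    reductionSet K (G.map (powMonoidHom m : Kˣ →* Kˣ)) v
      = (fun z : (𝓞 K) ⧸ v.asIdeal => z ^ m) '' reductionSet K G v := by
  have hinj : Function.Injective (algebraMap (𝓞 K) K) := IsFractionRing.injective (𝓞 K) K
  ext y
  constructor
  · rintro ⟨g', ⟨g, hg, rfl⟩, a, b, hb, hab, hy⟩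
    obtain ⟨a', b', ha', hb', hab'⟩ := hv g hg
    have hb'0 := aux_mk_ne_zero hb'
    have hb0 := aux_mk_ne_zero hb
    set x : (𝓞 K) ⧸ v.asIdeal :=
      Ideal.Quotient.mk v.asIdeal a' * (Ideal.Quotient.mk v.asIdeal b')⁻¹ with hxdef
    refine ⟨x, ⟨g, hg, a', b', hb', hab', by rw [hxdef]; field_simp⟩, ?_⟩
    have hab2 : (g : K) ^ m * algebraMap (𝓞 K) K b = algebraMap (𝓞 K) K a := by
      rwa [powMonoidHom_apply, Units.val_pow_eq_pow_val] at hab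
    have hp' : (g : K) ^ m * algebraMap (𝓞 K) K b' ^ m = algebraMap (𝓞 K) K a' ^ m := by
      rw [← mul_pow, hab']
    have hK : algebraMap (𝓞 K) K (a * b' ^ m) = algebraMap (𝓞 K) K (a' ^ m * b) := by
      rw [map_mul, map_mul, map_pow, map_pow]
      linear_combination (-(algebraMap (𝓞 K) K b' ^ m)) * hab2
        + (algebraMap (𝓞 K) K b) * hp'
    have hO : a * b' ^ m = a' ^ m * b := hinj hK
    have hmod := congrArg (Ideal.Quotient.mk v.asIdeal) hO
    rw [map_mul, map_mul, map_pow, map_pow] at hmod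
    have hcancel : y * Ideal.Quotient.mk v.asIdeal b
        = x ^ m * Ideal.Quotient.mk v.asIdeal b := by
      rw [hy, hxdef]
      field_simp
      have hinv : Ideal.Quotient.mk v.asIdeal b' ^ m * (Ideal.Quotient.mk v.asIdeal b')⁻¹ ^ m = 1 := by
        rw [← mul_pow, mul_inv_cancel₀ hb'0, one_pow]
      linear_combination (Ideal.Quotient.mk v.asIdeal b')⁻¹ ^ m * hmod
        - Ideal.Quotient.mk v.asIdeal a * hinv
    exact (mul_right_cancel₀ hb0 hcancel).symm
  · rintro ⟨z, ⟨g, hg, a, b, hb, hab, hz⟩, rfl⟩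
    refine ⟨g ^ m, ⟨g, hg, rfl⟩, a ^ m, b ^ m, ?_, ?_, ?_⟩
    · intro hmem
      exact hb (v.isPrime.mem_of_pow_mem m hmem)
    · rw [Units.val_pow_eq_pow_val, map_pow, map_pow]
      rw [← hab]; ring
    · rw [map_pow, map_pow, ← hz]; ring

theorem aux_card_red_pow (G : Subgroup Kˣ) (v : HeightOneSpectrum (𝓞 K))
    (hv : GoodPrime K G v) :
    ∃ N : ℕ, N ≠ 0 ∧ Nat.card (reductionSet K G v) = N ∧
      ∀ m : ℕ, Nat.card (reductionSet K (G.map (powMonoidHom m : Kˣ →* Kˣ)) v)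
        = N / N.gcd m := by
  obtain ⟨⟨u, huH⟩, hgen⟩ := IsCyclic.exists_generator (α := ↥(auxRedSubgroup G v hv))
  have hHz : auxRedSubgroup G v hv = Subgroup.zpowers u := by
    refine le_antisymm ?_ (Subgroup.zpowers_le.mpr huH)
    intro x hx
    obtain ⟨k, hk⟩ := hgen ⟨x, hx⟩
    exact Subgroup.mem_zpowers_iff.mpr ⟨k, congrArg Subtype.val hk⟩
  have hcoe : ∀ t : Set ((𝓞 K) ⧸ v.asIdeal)ˣ,
      Nat.card ((fun x : ((𝓞 K) ⧸ v.asIdeal)ˣ => (x : (𝓞 K) ⧸ v.asIdeal)) '' t) = Nat.card t :=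
    fun t => Nat.card_image_of_injective Units.val_injective t
  refine ⟨orderOf u, ?_, ?_, ?_⟩
  · simpa using (orderOf_pos u).ne'
  · rw [aux_red_eq_coe G v hv, hHz, hcoe]
    exact Nat.card_zpowers u
  · intro m
    rw [aux_red_pow_eq G v hv m, aux_red_eq_coe G v hv, hHz]
    rw [Set.image_image]
    have himg : (fun x : ((𝓞 K) ⧸ v.asIdeal)ˣ => (x : (𝓞 K) ⧸ v.asIdeal) ^ m)
        = (fun x : ((𝓞 K) ⧸ v.asIdeal)ˣ =>
            ((x ^ m : ((𝓞 K) ⧸ v.asIdeal)ˣ) : (𝓞 K) ⧸ v.asIdeal)) := by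
      funext x; rw [Units.val_pow_eq_pow_val]
    rw [himg]
    have h2 : (fun x : ((𝓞 K) ⧸ v.asIdeal)ˣ =>
          ((x ^ m : ((𝓞 K) ⧸ v.asIdeal)ˣ) : (𝓞 K) ⧸ v.asIdeal))
        '' ↑(Subgroup.zpowers u)
        = (fun x : ((𝓞 K) ⧸ v.asIdeal)ˣ => (x : (𝓞 K) ⧸ v.asIdeal))
          '' ((fun x => x ^ m) '' ↑(Subgroup.zpowers u)) := by
      rw [Set.image_image]
    rw [h2]
    have h3 : (fun x : ((𝓞 K) ⧸ v.asIdeal)ˣ => x ^ m) '' ↑(Subgroup.zpowers u)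
        = ↑(Subgroup.zpowers (u ^ m)) := by
      rw [← powMonoidHom_apply, ← MonoidHom.map_zpowers, Subgroup.coe_map]
      rfl
    rw [h3, hcoe]
    simp only [SetLike.coe_sort_coe]
    rw [Nat.card_zpowers, orderOf_pow]

theorem aux_gcd_prime_pow (ℓ : ℕ) (hℓ : ℓ.Prime) (N : ℕ) (hN : N ≠ 0) (j : ℕ) :
    N.gcd (ℓ ^ j) = ℓ ^ min (padicValNat ℓ N) j := by
  have hfac : (padicValNat ℓ N) = N.factorization ℓ := by
    rw [Nat.factorization_def _ hℓ]
  obtain ⟨k, hkj, hk⟩ := (Nat.dvd_prime_pow hℓ).mp (Nat.gcd_dvd_right N (ℓ ^ j))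
  have hkN : ℓ ^ k ∣ N := hk ▸ Nat.gcd_dvd_left N (ℓ ^ j)
  have hka : k ≤ padicValNat ℓ N := by
    rw [hfac]; exact (Nat.Prime.pow_dvd_iff_le_factorization hℓ hN).mp hkN
  have hdvd : ℓ ^ min (padicValNat ℓ N) j ∣ N.gcd (ℓ ^ j) := by
    refine Nat.dvd_gcd ?_ (pow_dvd_pow ℓ (min_le_right _ _))
    rw [hfac]
    exact (Nat.Prime.pow_dvd_iff_le_factorization hℓ hN).mpr (min_le_left _ _)
  rw [hk] at hdvd ⊢
  exact Nat.dvd_antisymm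
    ((Nat.pow_dvd_pow_iff_le_right hℓ.one_lt).mpr (le_min hka hkj)) hdvd

theorem aux_dvd_div_gcd_iff (ℓ : ℕ) (hℓ : ℓ.Prime) (N : ℕ) (hN : N ≠ 0) (j : ℕ) :
    ℓ ∣ N / N.gcd (ℓ ^ j) ↔ j < padicValNat ℓ N := by
  have hfac : (padicValNat ℓ N) = N.factorization ℓ := by
    rw [Nat.factorization_def _ hℓ]
  rw [aux_gcd_prime_pow ℓ hℓ N hN j]
  have hdvdN : ℓ ^ min (padicValNat ℓ N) j ∣ N := by
    rw [hfac]
    exact (Nat.Prime.pow_dvd_iff_le_factorization hℓ hN).mpr (hfac ▸ min_le_left _ _)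
  rw [Nat.dvd_div_iff_mul_dvd hdvdN, ← pow_succ]
  rw [hfac, Nat.Prime.pow_dvd_iff_le_factorization hℓ hN, ← hfac]
  omega

theorem aux_finite_PN (N : ℕ) :
    {v : HeightOneSpectrum (𝓞 K) | Nat.card ((𝓞 K) ⧸ v.asIdeal) ≤ N}.Finite := by
  have hcard : ∀ v : HeightOneSpectrum (𝓞 K),
      Nat.card ((𝓞 K) ⧸ v.asIdeal) = Ideal.absNorm v.asIdeal := fun v => by
    rw [Ideal.absNorm_apply, Submodule.cardQuot_apply]
  have hinj : Function.Injective
      (fun v : HeightOneSpectrum (𝓞 K) => v.asIdeal) := fun v w h => by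
    cases v; cases w; simpa using h
  refine Set.Finite.of_finite_image ?_ hinj.injOn
  have hsub : (fun v : HeightOneSpectrum (𝓞 K) => v.asIdeal) ''
      {v | Nat.card ((𝓞 K) ⧸ v.asIdeal) ≤ N}
      ⊆ ⋃ n ∈ Finset.range (N + 1), {I : Ideal (𝓞 K) | Ideal.absNorm I = n} := by
    rintro I ⟨v, hv, rfl⟩
    simp only [Set.mem_iUnion, Finset.mem_range]
    exact ⟨Ideal.absNorm v.asIdeal, Nat.lt_succ_of_le (hcard v ▸ hv), rfl⟩
  refine Set.Finite.subset ?_ hsub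
  exact Set.Finite.biUnion (Finset.range (N + 1)).finite_toSet
    (fun n _ => Ideal.finite_setOf_absNorm_eq n)

theorem aux_hasDensity_diff (S1 S2 : Set (HeightOneSpectrum (𝓞 K))) (h : S2 ⊆ S1)
    (D1 D2 : ℝ) (h1 : HasDensity K S1 D1) (h2 : HasDensity K S2 D2) :
    HasDensity K (S1 \ S2) (D1 - D2) := by
  have key : ∀ N : ℕ,
      (Nat.card {v : HeightOneSpectrum (𝓞 K) //
          v ∈ S1 \ S2 ∧ Nat.card ((𝓞 K) ⧸ v.asIdeal) ≤ N} : ℝ)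
      = (Nat.card {v : HeightOneSpectrum (𝓞 K) //
          v ∈ S1 ∧ Nat.card ((𝓞 K) ⧸ v.asIdeal) ≤ N} : ℝ)
      - (Nat.card {v : HeightOneSpectrum (𝓞 K) //
          v ∈ S2 ∧ Nat.card ((𝓞 K) ⧸ v.asIdeal) ≤ N} : ℝ) := by
    intro N
    have hA : {v : HeightOneSpectrum (𝓞 K) | Nat.card ((𝓞 K) ⧸ v.asIdeal) ≤ N}.Finite :=
      aux_finite_PN N
    set A := {v : HeightOneSpectrum (𝓞 K) | Nat.card ((𝓞 K) ⧸ v.asIdeal) ≤ N} with hAdef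
    have e1 : {v : HeightOneSpectrum (𝓞 K) | v ∈ S1 \ S2 ∧ v ∈ A}
        = (S1 ∩ A) \ (S2 ∩ A) := by
      ext v; simp only [Set.mem_setOf_eq, Set.mem_diff, Set.mem_inter_iff]
      constructor
      · rintro ⟨⟨hv1, hv2⟩, hvA⟩; exact ⟨⟨hv1, hvA⟩, fun h' => hv2 h'.1⟩
      · rintro ⟨⟨hv1, hvA⟩, hv2⟩; exact ⟨⟨hv1, fun h' => hv2 ⟨h', hvA⟩⟩, hvA⟩
    have hfin1 : (S1 ∩ A).Finite := hA.subset Set.inter_subset_right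
    have hfin2 : (S2 ∩ A).Finite := hA.subset Set.inter_subset_right
    have hsub' : S2 ∩ A ⊆ S1 ∩ A := Set.inter_subset_inter_left A h
    have c1 : Nat.card {v : HeightOneSpectrum (𝓞 K) //
        v ∈ S1 \ S2 ∧ Nat.card ((𝓞 K) ⧸ v.asIdeal) ≤ N}
        = ((S1 ∩ A) \ (S2 ∩ A)).ncard := by
      rw [← e1, ← Nat.card_coe_set_eq]
      rfl
    have c2 : Nat.card {v : HeightOneSpectrum (𝓞 K) //
        v ∈ S1 ∧ Nat.card ((𝓞 K) ⧸ v.asIdeal) ≤ N} = (S1 ∩ A).ncard := by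
      rw [← Nat.card_coe_set_eq]
      apply Nat.card_congr
      exact Equiv.setCongr (by ext v; exact Iff.rfl)
    have c3 : Nat.card {v : HeightOneSpectrum (𝓞 K) //
        v ∈ S2 ∧ Nat.card ((𝓞 K) ⧸ v.asIdeal) ≤ N} = (S2 ∩ A).ncard := by
      rw [← Nat.card_coe_set_eq]
      apply Nat.card_congr
      exact Equiv.setCongr (by ext v; exact Iff.rfl)
    rw [c1, c2, c3, Set.ncard_diff hsub' hfin2]
    have hle : (S2 ∩ A).ncard ≤ (S1 ∩ A).ncard := Set.ncard_le_ncard hsub' hfin1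
    push_cast [hle]
    ring
  unfold HasDensity at h1 h2 ⊢
  have := Filter.Tendsto.sub h1 h2
  refine this.congr (fun N => ?_)
  rw [key N, sub_div]

end AuxProofs

/-- for `n ≥ 1`, the set of primes of `K` at which the size of the
reduction of `G` has `ℓ`-adic valuation exactly `n` has a natural density, equal to
`D_{K,ℓ}(G^{ℓ^n}) - D_{K,ℓ}(G^{ℓ^{n-1}})`. -/
theorem stmt19 (K : Type) [Field K] [NumberField K] (ℓ : ℕ) (hℓ : ℓ.Prime)
    (G : Subgroup Kˣ) (hfg : G.FG) (n : ℕ) (hn : 1 ≤ n)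
    (D1 D2 : ℝ)
    (hD1 : HasDensity K
      (CoprimeRed K ℓ (Subgroup.map (powMonoidHom (ℓ ^ n) : Kˣ →* Kˣ) G)) D1)
    (hD2 : HasDensity K
      (CoprimeRed K ℓ (Subgroup.map (powMonoidHom (ℓ ^ (n - 1)) : Kˣ →* Kˣ) G)) D2) :
    HasDensity K
      {v | GoodPrime K G v ∧ padicValNat ℓ (Nat.card (reductionSet K G v)) = n}
      (D1 - D2) := by
  have hℓ0 : ℓ ≠ 0 := hℓ.ne_zero
  have hpn : (ℓ : ℕ) ^ n ≠ 0 := pow_ne_zero _ hℓ0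
  have hpn1 : (ℓ : ℕ) ^ (n - 1) ≠ 0 := pow_ne_zero _ hℓ0
  set S1 := CoprimeRed K ℓ (Subgroup.map (powMonoidHom (ℓ ^ n) : Kˣ →* Kˣ) G) with hS1
  set S2 := CoprimeRed K ℓ (Subgroup.map (powMonoidHom (ℓ ^ (n - 1)) : Kˣ →* Kˣ) G) with hS2
  -- characterize membership in S1 and S2 for good primes
  have hmem1 : ∀ v : HeightOneSpectrum (𝓞 K), GoodPrime K G v →
      ∀ j : ℕ, ((GoodPrime K (Subgroup.map (powMonoidHom (ℓ ^ j) : Kˣ →* Kˣ) G) v ∧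
        ¬ ℓ ∣ Nat.card (reductionSet K
          (Subgroup.map (powMonoidHom (ℓ ^ j) : Kˣ →* Kˣ) G) v))
      ↔ padicValNat ℓ (Nat.card (reductionSet K G v)) ≤ j) := by
    intro v hv j
    obtain ⟨N, hN0, hcard, hpow⟩ := aux_card_red_pow G v hv
    have hgood : GoodPrime K (Subgroup.map (powMonoidHom (ℓ ^ j) : Kˣ →* Kˣ) G) v :=
      (aux_good_map_iff G v (ℓ ^ j) (pow_ne_zero _ hℓ0)).mpr hv
    rw [hcard, hpow (ℓ ^ j), aux_dvd_div_gcd_iff ℓ hℓ N hN0 j]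
    constructor
    · rintro ⟨-, hnd⟩; omega
    · intro hle; exact ⟨hgood, by omega⟩
  have hsub : S2 ⊆ S1 := by
    rintro v ⟨hgood2, hnd2⟩
    have hv : GoodPrime K G v :=
      (aux_good_map_iff G v (ℓ ^ (n - 1)) hpn1).mp hgood2
    have h2 := (hmem1 v hv (n - 1)).mp ⟨hgood2, hnd2⟩
    exact (hmem1 v hv n).mpr (by omega)
  have hset : {v | GoodPrime K G v ∧ padicValNat ℓ (Nat.card (reductionSet K G v)) = n}
      = S1 \ S2 := by
    ext v
    simp only [Set.mem_setOf_eq, Set.mem_diff]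
    constructor
    · rintro ⟨hv, hval⟩
      refine ⟨(hmem1 v hv n).mpr (by omega), ?_⟩
      intro h2
      have := (hmem1 v hv (n - 1)).mp h2
      omega
    · rintro ⟨h1, h2⟩
      have hv : GoodPrime K G v :=
        (aux_good_map_iff G v (ℓ ^ n) hpn).mp h1.1
      have hle : padicValNat ℓ (Nat.card (reductionSet K G v)) ≤ n := (hmem1 v hv n).mp h1
      have hgt : ¬ padicValNat ℓ (Nat.card (reductionSet K G v)) ≤ n - 1 := by
        intro hle'
        exact h2 ((hmem1 v hv (n - 1)).mpr hle')
      exact ⟨hv, by omega⟩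
  rw [hset]
  exact aux_hasDensity_diff S1 S2 hsub D1 D2 hD1 hD2
end
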